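/- arXiv:1602.07607 — 9 statements merged into one kernel-verified Lean document; each statement's English description precedes it below -/
import Mathlib

section
/- Any k-colouring of the edges of the complete graph on 2^k + 1 vertices contains a monochromatic odd cycle. -/
open SimpleGraph

private lemma path_edge_one {V : Type*} {G : SimpleGraph V} {u v : V}
    (p : G.Walk v u) (hp : p.IsPath) (he : s(u, v) ∈ p.edges) : p.length = 1 := by
  cases p with
  | nil => simp at he
  | @cons _ x _ h' q =>
    rw [SimpleGraph.Walk.edges_cons] at he
    rcases List.mem_cons.mp he with heq | hmem
    · rw [Sym2.eq_iff] at heq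
      rcases heq with ⟨h1, h2⟩ | ⟨h1, _⟩
      · subst h1; subst h2; exact absurd rfl h'.ne
      · subst h1
        have hq : q = SimpleGraph.Walk.nil :=
          SimpleGraph.Walk.isPath_iff_eq_nil.mp hp.of_cons
      
        simp [hq]
    · have hv : v ∈ q.support := SimpleGraph.Walk.snd_mem_support_of_mem_edges q hmem
      rw [SimpleGraph.Walk.cons_isPath_iff] at hp
      exact absurd hv hp.2

private lemma exists_odd_cycle {V : Type*} [DecidableEq V] {G : SimpleGraph V} :
    ∀ (n : ℕ) {u : V} (w : G.Walk u u), w.length = n → Odd n →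
      ∃ (x : V) (c : G.Walk x x), c.IsCycle ∧ Odd c.length := by
  intro n
  induction n using Nat.strong_induction_on with
  | _ n ih =>
    intro u w hl hodd
    cases w with
    | nil =>
      rw [Walk.length_nil] at hl
      subst hl
      simp [Nat.odd_iff] at hodd
    | @cons _ v _ h p =>
      rw [Walk.length_cons] at hl
      by_cases hp : p.support.Nodup
      · refine ⟨u, Walk.cons h p, ?_, ?_⟩
        · rw [Walk.cons_isCycle_iff]
          refine ⟨(Walk.isPath_def p).mpr hp, fun hmem => ?_⟩
          have h1 := path_edge_one p ((Walk.isPath_def p).mpr hp) hmem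
          rw [h1] at hl
          subst hl
          simp [Nat.odd_iff] at hodd
        · rw [Walk.length_cons, hl]; exact hodd
      · obtain ⟨x, hdup⟩ := List.exists_duplicate_iff_not_nodup.mpr hp
        have hx : x ∈ p.support := hdup.mem
        have hcount : 2 ≤ p.support.count x := List.duplicate_iff_two_le_count.mp hdup
        have hq1 : (p.takeUntil x hx).support.count x = 1 :=
          p.count_support_takeUntil_eq_one hx
        have hsupp : p.support = (p.takeUntil x hx).support ++ (p.dropUntil x hx).support.tail := by
          conv_lhs => rw [← p.take_spec hx]
          exact Walk.support_append _ _
        have hxr : x ∈ (p.dropUntil x hx).support.tail := by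
          by_contra hc
          rw [hsupp, List.count_append, hq1, List.count_eq_zero_of_not_mem hc] at hcount
          omega
        have hlen : (p.takeUntil x hx).length + (p.dropUntil x hx).length = p.length := by
          conv_rhs => rw [← p.take_spec hx]
          rw [Walk.length_append]
        clear hsupp hq1 hcount hdup hp
        generalize hgen : p.dropUntil x hx = r at hxr hlen
        cases r with
        | nil => simp at hxr
        | @cons _ y _ h2 r2 =>
          rw [Walk.support_cons, List.tail_cons] at hxr
          have hlens : (r2.takeUntil x hxr).length + (r2.dropUntil x hxr).length = r2.length := by
            conv_rhs => rw [← r2.take_spec hxr]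
            rw [Walk.length_append]
          rw [Walk.length_cons] at hlen
          set a := (p.takeUntil x hx).length with ha
          set b := (r2.takeUntil x hxr).length with hb
          set d := (r2.dropUntil x hxr).length with hd
          -- n = a + b + d + 2
          have hn : n = a + b + d + 2 := by omega
          rcases Nat.even_or_odd (b + 1) with hev | hodd1
          · -- c2 odd
            have hodd2 : Odd (a + d + 1) := by
              rw [Nat.odd_iff] at hodd ⊢
              rw [Nat.even_iff] at hev
              omega
            exact ih (a + d + 1) (by omega)
              (Walk.cons h ((p.takeUntil x hx).append (r2.dropUntil x hxr)))
              (by rw [Walk.length_cons, Walk.length_append]) hodd2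
          · exact ih (b + 1) (by omega) (Walk.cons h2 (r2.takeUntil x hxr))
              (by rw [Walk.length_cons]) hodd1

/-- Any `k`-colouring of the edges of the complete graph on `2^k + 1` vertices
contains a monochromatic odd cycle. -/
theorem stmt0 (k : ℕ) (C : Sym2 (Fin (2 ^ k + 1)) → Fin k) :
    ∃ (v : Fin (2 ^ k + 1)) (w : (⊤ : SimpleGraph (Fin (2 ^ k + 1))).Walk v v),
      w.IsCycle ∧ Odd w.length ∧ ∃ c : Fin k, ∀ e ∈ w.edges, C e = c := by
  classical
  by_contra hcon
  push_neg at hcon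
  let G : Fin k → SimpleGraph (Fin (2 ^ k + 1)) := fun c =>
    { Adj := fun a b => a ≠ b ∧ C s(a, b) = c
      symm := by
        constructor
        rintro a b ⟨hne, hc⟩
        exact ⟨hne.symm, by rwa [Sym2.eq_swap]⟩
      loopless := ⟨fun a ha => ha.1 rfl⟩ }
  have key : ∀ (c : Fin k) (x : Fin (2 ^ k + 1)) (w : (G c).Walk x x), ¬ Odd w.length := by
    intro c x w hodd
    obtain ⟨y, cyc, hcyc, hcodd⟩ := exists_odd_cycle w.length w rfl hodd
    have hsub : ∀ e ∈ cyc.edges, e ∈ (⊤ : SimpleGraph (Fin (2 ^ k + 1))).edgeSet := by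
      intro e he
      have h2 := cyc.edges_subset_edgeSet he
      induction e with
      | h a b =>
        rw [SimpleGraph.mem_edgeSet] at h2 ⊢
        exact h2.1
    have hcol : ∀ e ∈ cyc.edges, C e = c := by
      intro e he
      have h2 := cyc.edges_subset_edgeSet he
      induction e with
      | h a b =>
        rw [SimpleGraph.mem_edgeSet] at h2
        exact h2.2
    have := hcon y (cyc.transfer ⊤ hsub) (hcyc.transfer hsub)
      (by rwa [Walk.length_transfer]) c
    obtain ⟨e, he, hne⟩ := this
    rw [Walk.edges_transfer] at he
    exact hne (hcol e he)
  let f : Fin (2 ^ k + 1) → (Fin k → Bool) := fun v c =>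
    decide (Odd ((G c).dist (((G c).connectedComponentMk v).out) v))
  have hadj : ∀ (c : Fin k) (a b : Fin (2 ^ k + 1)), (G c).Adj a b → f a c ≠ f b c := by
    intro c a b hab
    have hcomp : (G c).connectedComponentMk a = (G c).connectedComponentMk b :=
      SimpleGraph.ConnectedComponent.connectedComponentMk_eq_of_adj hab
    have hra : (G c).Reachable (((G c).connectedComponentMk a).out) a :=
      SimpleGraph.ConnectedComponent.exact (Quot.out_eq _)
    have hrb : (G c).Reachable (((G c).connectedComponentMk a).out) b :=
      hra.trans hab.reachable
    obtain ⟨p, hpl⟩ := hra.exists_walk_length_eq_dist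
    obtain ⟨q, hql⟩ := hrb.exists_walk_length_eq_dist
    have hkey := key c _ (p.append (Walk.cons hab q.reverse))
    rw [Walk.length_append, Walk.length_cons, Walk.length_reverse, hpl, hql] at hkey
    have hpar : Odd ((G c).dist (((G c).connectedComponentMk a).out) a) ↔
        ¬ Odd ((G c).dist (((G c).connectedComponentMk a).out) b) := by
      rw [Nat.odd_iff, Nat.odd_iff]
      rw [Nat.odd_iff] at hkey
      omega
    have hfb : f b c = decide (Odd ((G c).dist (((G c).connectedComponentMk a).out) b)) := by
      simp only [f, hcomp]
    have hfa : f a c = decide (Odd ((G c).dist (((G c).connectedComponentMk a).out) a)) := rfl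
    rw [hfa, hfb]
    simp only [ne_eq, decide_eq_decide]
    intro hiff
    rw [hpar] at hiff
    tauto
  have hcard : Fintype.card (Fin k → Bool) < Fintype.card (Fin (2 ^ k + 1)) := by
    simp [Fintype.card_fun]
  obtain ⟨a, b, hne, hfeq⟩ := Fintype.exists_ne_map_eq_of_card_lt f hcard
  exact hadj (C s(a, b)) a b ⟨hne, rfl⟩ (congrFun hfeq (C s(a, b)))
end

section
/- If positive integers r_1, ..., r_k and n are such that there exists an (r_1,...,r_k)-rooted-round-colouring of K_n, then there exists an (r_1+2, r_2, ..., r_k, 2r_1 - 1)-rooted-round-colouring of K_{2n-1}. -/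
/-- The colour class of colour `c` in an edge colouring `C` of a complete graph. -/
def classOf {n : ℕ} {κ : Type*} (C : Sym2 (Fin n) → κ) (c : κ) : SimpleGraph (Fin n) :=
  SimpleGraph.fromRel fun x y => C s(x, y) = c

/-- `G` is a rooted `r`-round graph with root `O`: the vertices are partitioned
into parts indexed cyclically by `ZMod r`, every edge joins cyclically
consecutive parts, and the part `X_1` (index `0`) is exactly `{O}`. -/
def IsRootedRound {V : Type*} (G : SimpleGraph V) (r : ℕ) (O : V) : Prop :=
  ∃ p : V → ZMod r,
    (∀ u v : V, G.Adj u v → p v = p u + 1 ∨ p u = p v + 1) ∧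
    p O = 0 ∧ ∀ v : V, p v = 0 → v = O

/-- `C` is an `(r_1, …, r_k)`-rooted-round-colouring of `K_n`: there is a common
root `O` such that each colour class `i` is a rooted `r_i`-round graph with root `O`. -/
def IsRRC (n : ℕ) (rs : List ℕ) (C : Sym2 (Fin n) → Fin rs.length) : Prop :=
  ∃ O : Fin n, ∀ i : Fin rs.length, IsRootedRound (classOf C i) (rs.get i) O

namespace Stmt6Aux

/-- Projection from the doubled vertex set to `Fin n`: vertices `< n` form copy A
(including the root `O`), vertices `≥ n` form copy B, enumerating `Fin n \ {O}`. -/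
def proj (n : ℕ) (O : Fin n) (w : Fin (2 * n - 1)) : Fin n :=
  if h : w.val < n then ⟨w.val, h⟩
  else if h2 : w.val - n < O.val then ⟨w.val - n, by have := O.isLt; omega⟩
  else ⟨w.val - n + 1, by have := w.isLt; omega⟩

/-- the root of the doubled graph -/
def rt (n : ℕ) (O : Fin n) : Fin (2 * n - 1) := ⟨O.val, by have := O.isLt; omega⟩

lemma proj_eq_of_lt {n : ℕ} (O : Fin n) (w : Fin (2 * n - 1)) (h : w.val < n) :
    proj n O w = ⟨w.val, h⟩ := dif_pos h

lemma proj_rt {n : ℕ} (O : Fin n) : proj n O (rt n O) = O := by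
  rw [proj_eq_of_lt O _ (show (rt n O).val < n from O.isLt)]
  exact Fin.ext rfl

lemma proj_ne_of_ge {n : ℕ} (O : Fin n) (w : Fin (2 * n - 1)) (h : ¬ w.val < n) :
    proj n O w ≠ O := by
  unfold proj
  rw [dif_neg h]
  split_ifs with h2 <;> intro he <;> rw [Fin.ext_iff] at he <;> simp at he <;> omega

lemma proj_inj_left {n : ℕ} (O : Fin n) (w w' : Fin (2 * n - 1))
    (hw : w.val < n) (hw' : w'.val < n) (h : proj n O w = proj n O w') : w = w' := by
  rw [proj_eq_of_lt O w hw, proj_eq_of_lt O w' hw', Fin.ext_iff] at h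
  exact Fin.ext h

lemma proj_inj_right {n : ℕ} (O : Fin n) (w w' : Fin (2 * n - 1))
    (hw : ¬ w.val < n) (hw' : ¬ w'.val < n) (h : proj n O w = proj n O w') : w = w' := by
  unfold proj at h
  rw [dif_neg hw, dif_neg hw'] at h
  split_ifs at h <;> rw [Fin.ext_iff] at h <;> simp at h <;> exact Fin.ext (by omega)

lemma proj_eq_root {n : ℕ} (O : Fin n) (w : Fin (2 * n - 1)) (h : proj n O w = O) :
    w = rt n O := by
  by_cases h1 : w.val < n
  · rw [proj_eq_of_lt O w h1, Fin.ext_iff] at h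
    exact Fin.ext h
  · exact absurd h (proj_ne_of_ge O w h1)

/-- level map for the new colour `0` -/
def QM (n r1 : ℕ) (O : Fin n) (p0 : Fin n → ZMod r1) (w : Fin (2 * n - 1)) : ZMod (r1 + 2) :=
  if w.val < n then (((p0 (proj n O w)).val : ℕ) : ZMod (r1 + 2))
  else (((p0 (proj n O w)).val + 2 : ℕ) : ZMod (r1 + 2))

/-- level map for the new last colour -/
def SM (n r1 : ℕ) (O : Fin n) (p0 : Fin n → ZMod r1) (w : Fin (2 * n - 1)) : ZMod (2 * r1 - 1) :=
  if w.val < n then ((2 * (p0 (proj n O w)).val : ℕ) : ZMod (2 * r1 - 1))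
  else ((2 * (p0 (proj n O w)).val - 1 : ℕ) : ZMod (2 * r1 - 1))

lemma QM_A {n r1 : ℕ} (O : Fin n) (p0 : Fin n → ZMod r1) (w : Fin (2 * n - 1))
    (h : w.val < n) : QM n r1 O p0 w = (((p0 (proj n O w)).val : ℕ) : ZMod (r1 + 2)) :=
  if_pos h

lemma QM_B {n r1 : ℕ} (O : Fin n) (p0 : Fin n → ZMod r1) (w : Fin (2 * n - 1))
    (h : ¬ w.val < n) : QM n r1 O p0 w = (((p0 (proj n O w)).val + 2 : ℕ) : ZMod (r1 + 2)) :=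
  if_neg h

lemma SM_A {n r1 : ℕ} (O : Fin n) (p0 : Fin n → ZMod r1) (w : Fin (2 * n - 1))
    (h : w.val < n) : SM n r1 O p0 w = ((2 * (p0 (proj n O w)).val : ℕ) : ZMod (2 * r1 - 1)) :=
  if_pos h

lemma SM_B {n r1 : ℕ} (O : Fin n) (p0 : Fin n → ZMod r1) (w : Fin (2 * n - 1))
    (h : ¬ w.val < n) : SM n r1 O p0 w = ((2 * (p0 (proj n O w)).val - 1 : ℕ) : ZMod (2 * r1 - 1)) :=
  if_neg h

lemma cast_succ (K x y : ℕ) (h : y = x + 1) : ((y : ℕ) : ZMod K) = ((x : ℕ) : ZMod K) + 1 := by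
  subst h; rw [Nat.cast_add, Nat.cast_one]

lemma cast_add_one_eq_zero (K x : ℕ) (h : x + 1 = K) : ((x : ℕ) : ZMod K) + 1 = 0 := by
  subst h
  rw [← Nat.cast_one (R := ZMod (x + 1)), ← Nat.cast_add, ZMod.natCast_self]

lemma zmod_succ_val {r : ℕ} (hr : 2 ≤ r) {x y : ZMod r} (h : y = x + 1) :
    (x.val + 1 < r ∧ y.val = x.val + 1) ∨ (x.val = r - 1 ∧ y.val = 0) := by
  haveI : NeZero r := ⟨by omega⟩
  haveI : Fact (1 < r) := ⟨hr⟩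
  have hx := ZMod.val_lt x
  have hy : y.val = (x.val + 1) % r := by rw [h, ZMod.val_add, ZMod.val_one]
  by_cases hc : x.val + 1 < r
  · exact Or.inl ⟨hc, by rw [hy, Nat.mod_eq_of_lt hc]⟩
  · refine Or.inr ⟨by omega, ?_⟩
    rw [hy, show x.val + 1 = r by omega, Nat.mod_self]

/-- The key combinatorial lemma: any "twin" pair and any pair which was consecutive for
the old colour `0` is consecutive for `QM` or for `SM`. -/
lemma main_lemma {n r1 : ℕ} (hr2 : 2 ≤ r1) (O : Fin n) (p0 : Fin n → ZMod r1)
    (huniq : ∀ v, p0 v = 0 → v = O) (w w' : Fin (2 * n - 1)) (hne : w ≠ w')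
    (hc : proj n O w = proj n O w' ∨ p0 (proj n O w') = p0 (proj n O w) + 1) :
    (QM n r1 O p0 w' = QM n r1 O p0 w + 1 ∨ QM n r1 O p0 w = QM n r1 O p0 w' + 1) ∨
    (SM n r1 O p0 w' = SM n r1 O p0 w + 1 ∨ SM n r1 O p0 w = SM n r1 O p0 w' + 1) := by
  haveI : NeZero r1 := ⟨by omega⟩
  have har : (p0 (proj n O w)).val < r1 := ZMod.val_lt _
  have hbr : (p0 (proj n O w')).val < r1 := ZMod.val_lt _
  by_cases hw : w.val < n <;> by_cases hw' : w'.val < n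
  · -- A A
    rcases hc with ht | hsucc
    · exact absurd (proj_inj_left O w w' hw hw' ht) hne
    · rcases zmod_succ_val hr2 hsucc with ⟨hlt, hb⟩ | ⟨ha, hb⟩
      · refine Or.inl (Or.inl ?_)
        rw [QM_A O p0 w hw, QM_A O p0 w' hw']
        exact cast_succ _ _ _ hb
      · refine Or.inr (Or.inl ?_)
        rw [SM_A O p0 w hw, SM_A O p0 w' hw', ha, hb, show (2 * 0 : ℕ) = 0 from rfl,
          Nat.cast_zero]
        exact (cast_add_one_eq_zero _ _ (by omega)).symm
  · -- A B
    rcases hc with ht | hsucc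
    · -- twin : SM w = SM w' + 1
      have hval : (p0 (proj n O w)).val = (p0 (proj n O w')).val := by rw [ht]
      have hb0 : (p0 (proj n O w')).val ≠ 0 := by
        intro h0
        exact proj_ne_of_ge O w' hw' (huniq _ ((ZMod.val_eq_zero _).1 h0))
      refine Or.inr (Or.inr ?_)
      rw [SM_A O p0 w hw, SM_B O p0 w' hw']
      exact cast_succ _ _ _ (by omega)
    · rcases zmod_succ_val hr2 hsucc with ⟨hlt, hb⟩ | ⟨ha, hb⟩
      · refine Or.inr (Or.inl ?_)
        rw [SM_A O p0 w hw, SM_B O p0 w' hw']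
        exact cast_succ _ _ _ (by omega)
      · exfalso
        exact proj_ne_of_ge O w' hw' (huniq _ ((ZMod.val_eq_zero _).1 hb))
  · -- B A
    rcases hc with ht | hsucc
    · have hval : (p0 (proj n O w)).val = (p0 (proj n O w')).val := by rw [ht]
      have hb0 : (p0 (proj n O w)).val ≠ 0 := by
        intro h0
        exact proj_ne_of_ge O w hw (huniq _ ((ZMod.val_eq_zero _).1 h0))
      refine Or.inr (Or.inl ?_)
      rw [SM_B O p0 w hw, SM_A O p0 w' hw']
      exact cast_succ _ _ _ (by omega)
    · rcases zmod_succ_val hr2 hsucc with ⟨hlt, hb⟩ | ⟨ha, hb⟩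
      · refine Or.inl (Or.inr ?_)
        rw [QM_B O p0 w hw, QM_A O p0 w' hw']
        exact cast_succ _ _ _ (by omega)
      · refine Or.inl (Or.inl ?_)
        rw [QM_B O p0 w hw, QM_A O p0 w' hw', ha, hb, Nat.cast_zero]
        exact (cast_add_one_eq_zero _ _ (by omega)).symm
  · -- B B
    rcases hc with ht | hsucc
    · exact absurd (proj_inj_right O w w' hw hw' ht) hne
    · rcases zmod_succ_val hr2 hsucc with ⟨hlt, hb⟩ | ⟨ha, hb⟩
      · refine Or.inl (Or.inl ?_)
        rw [QM_B O p0 w hw, QM_B O p0 w' hw']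
        exact cast_succ _ _ _ (by omega)
      · exfalso
        exact proj_ne_of_ge O w' hw' (huniq _ ((ZMod.val_eq_zero _).1 hb))

/-- the new colouring, as a symmetric two-variable function -/
def chi (n r1 k : ℕ) (O : Fin n) (C : Sym2 (Fin n) → Fin (k + 1)) (p0 : Fin n → ZMod r1)
    (w w' : Fin (2 * n - 1)) : Fin (k + 2) :=
  if proj n O w = proj n O w' ∨ C s(proj n O w, proj n O w') = ⟨0, Nat.succ_pos k⟩ then
    (if QM n r1 O p0 w' = QM n r1 O p0 w + 1 ∨ QM n r1 O p0 w = QM n r1 O p0 w' + 1 then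
      ⟨0, by omega⟩ else ⟨k + 1, by omega⟩)
  else Fin.castSucc (C s(proj n O w, proj n O w'))

lemma chi_symm (n r1 k : ℕ) (O : Fin n) (C : Sym2 (Fin n) → Fin (k + 1))
    (p0 : Fin n → ZMod r1) (w w' : Fin (2 * n - 1)) :
    chi n r1 k O C p0 w w' = chi n r1 k O C p0 w' w := by
  unfold chi
  rw [show s(proj n O w', proj n O w) = s(proj n O w, proj n O w') from Sym2.eq_swap]
  exact if_congr (or_congr_left eq_comm) (if_congr or_comm rfl rfl) rfl

lemma chi_zero {n r1 k : ℕ} (O : Fin n) (C : Sym2 (Fin n) → Fin (k + 1))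
    (p0 : Fin n → ZMod r1) (w w' : Fin (2 * n - 1))
    (h : chi n r1 k O C p0 w w' = ⟨0, by omega⟩) :
    QM n r1 O p0 w' = QM n r1 O p0 w + 1 ∨ QM n r1 O p0 w = QM n r1 O p0 w' + 1 := by
  unfold chi at h
  split_ifs at h with h1 h2
  · exact h2
  · exact absurd (congrArg Fin.val h) (by simp)
  · exfalso
    apply h1
    exact Or.inr (Fin.ext (by simpa using congrArg Fin.val h))

lemma chi_last {n r1 k : ℕ} (O : Fin n) (C : Sym2 (Fin n) → Fin (k + 1))
    (p0 : Fin n → ZMod r1) (w w' : Fin (2 * n - 1))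
    (h : chi n r1 k O C p0 w w' = ⟨k + 1, by omega⟩) :
    (proj n O w = proj n O w' ∨ C s(proj n O w, proj n O w') = ⟨0, Nat.succ_pos k⟩) ∧
      ¬ (QM n r1 O p0 w' = QM n r1 O p0 w + 1 ∨ QM n r1 O p0 w = QM n r1 O p0 w' + 1) := by
  unfold chi at h
  split_ifs at h with h1 h2
  · exact absurd (congrArg Fin.val h) (by simp)
  · exact ⟨h1, h2⟩
  · exfalso
    have := congrArg Fin.val h
    simp at this
    have := (C s(proj n O w, proj n O w')).isLt
    omega

lemma chi_middle {n r1 k : ℕ} (O : Fin n) (C : Sym2 (Fin n) → Fin (k + 1))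
    (p0 : Fin n → ZMod r1) (w w' : Fin (2 * n - 1)) {iv : ℕ} (hiv : iv < k + 2)
    (h : chi n r1 k O C p0 w w' = ⟨iv, hiv⟩) (h0 : iv ≠ 0) (hk : iv ≠ k + 1) :
    proj n O w ≠ proj n O w' ∧
      C s(proj n O w, proj n O w') = ⟨iv, by omega⟩ := by
  unfold chi at h
  split_ifs at h with h1 h2
  · exact absurd (congrArg Fin.val h) (by simp [Ne.symm h0])
  · exact absurd (congrArg Fin.val h) (by simp [Ne.symm hk])
  · push_neg at h1
    exact ⟨h1.1, Fin.ext (by simpa using congrArg Fin.val h)⟩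

end Stmt6Aux

open Stmt6Aux in
/-- If there is an `(r_1, …, r_k)`-rooted-round-colouring of `K_n`, then there is an
`(r_1 + 2, r_2, …, r_k, 2r_1 - 1)`-rooted-round-colouring of `K_{2n-1}`. -/
theorem stmt6 (n r1 : ℕ) (rs : List ℕ) (hn : 0 < n) (hr1 : 0 < r1)
    (hrs : ∀ r ∈ rs, 0 < r)
    (h : ∃ C : Sym2 (Fin n) → Fin (r1 :: rs).length, IsRRC n (r1 :: rs) C) :
    ∃ C : Sym2 (Fin (2 * n - 1)) → Fin ((r1 + 2) :: (rs ++ [2 * r1 - 1])).length,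
      IsRRC (2 * n - 1) ((r1 + 2) :: (rs ++ [2 * r1 - 1])) C := by
  classical
  obtain ⟨C, O, H⟩ := h
  set k := rs.length with hk
  by_cases hn1 : 2 * n - 1 ≤ 1
  · -- degenerate case: at most one vertex
    refine ⟨fun _ => ⟨0, by simp⟩, ⟨0, by omega⟩, fun i => ⟨fun _ => 0, ?_, rfl, ?_⟩⟩
    · intro u v huv
      exact absurd (Fin.ext (by have := u.isLt; have := v.isLt; omega)) huv.ne
    · intro v _
      apply Fin.ext
      have := v.isLt
      simp
      omega
  -- main case
  have hn2 : 2 ≤ n := by omega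
  have H0 : IsRootedRound (classOf C ⟨0, Nat.succ_pos k⟩) r1 O := H ⟨0, Nat.succ_pos k⟩
  obtain ⟨p0, hp0adj, hp0root, hp0uniq⟩ := H0
  obtain ⟨v0, hv0⟩ : ∃ v : Fin n, v ≠ O := by
    refine ⟨if h' : O.val = 0 then ⟨1, by omega⟩ else ⟨0, by omega⟩, ?_⟩
    split_ifs with h' <;> intro he <;> rw [Fin.ext_iff] at he <;> simp at he <;> omega
  have hr2 : 2 ≤ r1 := by
    by_contra hcon
    haveI : NeZero r1 := ⟨by omega⟩
    have h1 := ZMod.val_lt (p0 v0)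
    exact hv0 (hp0uniq v0 ((ZMod.val_eq_zero _).1 (by omega)))
  haveI : NeZero r1 := ⟨by omega⟩
  have hlen : ((r1 + 2) :: (rs ++ [2 * r1 - 1])).length = k + 2 := by simp [hk]
  have hlen2 : (r1 :: rs).length = k + 1 := by rw [hk]; simp
  set F := Sym2.lift ⟨fun w w' => Fin.cast hlen.symm (chi n r1 k O C p0 w w'),
    fun w w' => congrArg (Fin.cast hlen.symm) (chi_symm n r1 k O C p0 w w')⟩ with hF
  refine ⟨F, rt n O, ?_⟩
  intro i
  obtain ⟨iv, hivL⟩ := i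
  have hiv2 : iv < k + 2 := by omega
  -- a uniform way to read off the colour of an edge
  have hcol : ∀ (w w' : Fin (2 * n - 1)),
      (classOf F ⟨iv, hivL⟩).Adj w w' →
      w ≠ w' ∧ chi n r1 k O C p0 w w' = ⟨iv, hiv2⟩ := by
    intro w w' hadj
    rw [classOf, SimpleGraph.fromRel_adj] at hadj
    simp only [hF, Sym2.lift_mk] at hadj
    obtain ⟨hne, hcc⟩ := hadj
    refine ⟨hne, ?_⟩
    rcases hcc with hc | hc
    · exact Fin.ext (by simpa using congrArg Fin.val hc)
    · rw [chi_symm]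
      exact Fin.ext (by simpa using congrArg Fin.val hc)
  by_cases h0 : iv = 0
  · -- new colour 0, with r1 + 2 rounds
    subst h0
    refine ⟨QM n r1 O p0, ?_, ?_, ?_⟩
    · intro u v hadj
      obtain ⟨hne, hchi⟩ := hcol u v hadj
      exact chi_zero O C p0 u v hchi
    · rw [QM_A O p0 _ (show (rt n O).val < n from O.isLt), proj_rt, hp0root]
      simp
    · intro v hv
      by_cases hvn : v.val < n
      · rw [QM_A O p0 v hvn] at hv
        rw [ZMod.natCast_eq_zero_iff] at hv
        have hlt : (p0 (proj n O v)).val < r1 := ZMod.val_lt _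
        have : (p0 (proj n O v)).val = 0 := by
          rcases Nat.eq_zero_or_pos (p0 (proj n O v)).val with h' | h'
          · exact h'
          · exact absurd (Nat.le_of_dvd h' hv) (by omega)
        exact proj_eq_root O v (hp0uniq _ ((ZMod.val_eq_zero _).1 this))
      · rw [QM_B O p0 v hvn] at hv
        rw [ZMod.natCast_eq_zero_iff] at hv
        have hlt : (p0 (proj n O v)).val < r1 := ZMod.val_lt _
        exact absurd (Nat.le_of_dvd (by omega) hv) (by omega)
  by_cases hlast : iv = k + 1
  · -- new last colour, with 2 * r1 - 1 rounds
    subst hlast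
    have hget : ((r1 + 2) :: (rs ++ [2 * r1 - 1])).get ⟨k + 1, hivL⟩ = 2 * r1 - 1 := by
      simp [List.get_eq_getElem, hk]
    rw [hget]
    refine ⟨SM n r1 O p0, ?_, ?_, ?_⟩
    · intro u v hadj
      obtain ⟨hne, hchi⟩ := hcol u v hadj
      obtain ⟨hcase, hnq⟩ := chi_last O C p0 u v hchi
      rcases hcase with ht | hC0
      · rcases main_lemma hr2 O p0 hp0uniq u v hne (Or.inl ht) with hQ | hS
        · exact absurd hQ hnq
        · exact hS
      · by_cases hpp : proj n O u = proj n O v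
        · rcases main_lemma hr2 O p0 hp0uniq u v hne (Or.inl hpp) with hQ | hS
          · exact absurd hQ hnq
          · exact hS
        · have hadj0 : (classOf C ⟨0, Nat.succ_pos k⟩).Adj (proj n O u) (proj n O v) := by
            rw [classOf, SimpleGraph.fromRel_adj]
            exact ⟨hpp, Or.inl hC0⟩
          rcases hp0adj _ _ hadj0 with hsucc | hsucc
          · rcases main_lemma hr2 O p0 hp0uniq u v hne (Or.inr hsucc) with hQ | hS
            · exact absurd hQ hnq
            · exact hS
          · rcases main_lemma hr2 O p0 hp0uniq v u (Ne.symm hne) (Or.inr hsucc) with hQ | hS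
            · exact absurd hQ.symm hnq
            · exact hS.symm
    · rw [SM_A O p0 _ (show (rt n O).val < n from O.isLt), proj_rt, hp0root]
      simp
    · intro v hv
      have hlt : (p0 (proj n O v)).val < r1 := ZMod.val_lt _
      by_cases hvn : v.val < n
      · rw [SM_A O p0 v hvn] at hv
        rw [ZMod.natCast_eq_zero_iff] at hv
        have : (p0 (proj n O v)).val = 0 := by
          rcases Nat.eq_zero_or_pos (p0 (proj n O v)).val with h' | h'
          · exact h'
          · exact absurd (Nat.le_of_dvd (by omega) hv) (by omega)
        exact proj_eq_root O v (hp0uniq _ ((ZMod.val_eq_zero _).1 this))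
      · rw [SM_B O p0 v hvn] at hv
        rw [ZMod.natCast_eq_zero_iff] at hv
        have hne0 : (p0 (proj n O v)).val ≠ 0 := by
          intro h0
          exact proj_ne_of_ge O v hvn (hp0uniq _ ((ZMod.val_eq_zero _).1 h0))
        exact absurd (Nat.le_of_dvd (by omega) hv) (by omega)
  · -- middle colours: same as the old colouring
    obtain ⟨j, rfl⟩ : ∃ j, iv = j + 1 := ⟨iv - 1, by omega⟩
    have hj : j < k := by omega
    have Hc : IsRootedRound (classOf C ⟨j + 1, by omega⟩) (rs.get ⟨j, hj⟩) O :=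
      H ⟨j + 1, by omega⟩
    obtain ⟨pc, hcadj, hcroot, hcuniq⟩ := Hc
    have hget : ((r1 + 2) :: (rs ++ [2 * r1 - 1])).get ⟨j + 1, hivL⟩ = rs.get ⟨j, hj⟩ := by
      simp [List.get_eq_getElem]
      rw [List.getElem_append_left hj]
    rw [hget]
    refine ⟨fun w => pc (proj n O w), ?_, ?_, ?_⟩
    · intro u v hadj
      obtain ⟨hne, hchi⟩ := hcol u v hadj
      obtain ⟨hpne, hCc⟩ := chi_middle O C p0 u v hiv2 hchi h0 hlast
      have hadjc : (classOf C ⟨j + 1, by omega⟩).Adj (proj n O u) (proj n O v) := by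
        rw [classOf, SimpleGraph.fromRel_adj]
        exact ⟨hpne, Or.inl hCc⟩
      exact hcadj _ _ hadjc
    · show pc (proj n O (rt n O)) = 0
      rw [proj_rt]
      exact hcroot
    · intro v hv
      exact proj_eq_root O v (hcuniq _ hv)
end

section
/- Let r be an integer, and let A be a colouring of the complete graph G and B a colouring (in disjoint colours) of the complete graph H, both with no monochromatic odd cycle of length less than r. Then any product colouring of G × H in ×(A,B) also has no monochromatic odd cycle of length less than r. -/
open SimpleGraph

lemma path_edge_len {V : Type*} {G : SimpleGraph V} {b v : V} :
    ∀ (p : G.Walk b v), p.IsPath → s(v, b) ∈ p.edges → p.length = 1 := by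
  intro p
  induction p with
  | nil => intro _ h; simp at h
  | @cons u c w h q ih =>
    intro hp he
    rw [SimpleGraph.Walk.cons_isPath_iff] at hp
    rw [SimpleGraph.Walk.edges_cons, List.mem_cons] at he
    rcases he with he | he
    · rw [Sym2.eq_iff] at he
      rcases he with ⟨hv, hb⟩ | ⟨hv, -⟩
      · exact absurd (hb ▸ h) (hb ▸ G.loopless.irrefl c)
      · subst hv
        have : q = SimpleGraph.Walk.nil := (SimpleGraph.Walk.isPath_iff_eq_nil (p := q)).1 hp.1
        simp [this]
    · exact absurd (SimpleGraph.Walk.snd_mem_support_of_mem_edges q he) hp.2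

lemma split_closed {V : Type*} [DecidableEq V] {G : SimpleGraph V} {x : V} (q : G.Walk x x)
    (hc : 2 ≤ q.support.tail.count x) :
    ∃ (c1 c2 : G.Walk x x), c1.length + c2.length = q.length ∧ 1 ≤ c1.length ∧
      1 ≤ c2.length ∧ (∀ e ∈ c1.edges, e ∈ q.edges) ∧ (∀ e ∈ c2.edges, e ∈ q.edges) := by
  classical
  cases q with
  | nil => simp at hc
  | @cons _ b _ h p =>
    have htail : (SimpleGraph.Walk.cons h p).support.tail = p.support := by
      simp [SimpleGraph.Walk.support_cons]
    rw [htail] at hc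
    have hxs : x ∈ p.support := List.count_pos_iff.mp (by omega)
    have hlen : (p.takeUntil x hxs).length + (p.dropUntil x hxs).length = p.length := by
      have := congrArg SimpleGraph.Walk.length (p.take_spec hxs)
      rwa [SimpleGraph.Walk.length_append] at this
    have hc2 : 1 ≤ (p.dropUntil x hxs).length := by
      by_contra hzero
      have h0 : (p.dropUntil x hxs).length = 0 := by omega
      have hnil : p.dropUntil x hxs = SimpleGraph.Walk.nil :=
        SimpleGraph.Walk.nil_iff_eq_nil.mp (SimpleGraph.Walk.length_eq_zero_iff.mp h0)
      have hsupp := congrArg SimpleGraph.Walk.support (p.take_spec hxs)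
      rw [SimpleGraph.Walk.support_append, hnil] at hsupp
      have : p.support.count x = 1 := by
        rw [← hsupp]
        simpa using p.count_support_takeUntil_eq_one hxs
      omega
    refine ⟨SimpleGraph.Walk.cons h (p.takeUntil x hxs), p.dropUntil x hxs, ?_,
      by simp, hc2, ?_, ?_⟩
    · simp only [SimpleGraph.Walk.length_cons]; omega
    · intro e he
      rw [SimpleGraph.Walk.edges_cons, List.mem_cons] at he ⊢
      rcases he with he | he
      · exact Or.inl he
      · exact Or.inr (p.edges_takeUntil_subset hxs he)
    · intro e he
      rw [SimpleGraph.Walk.edges_cons, List.mem_cons]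
      exact Or.inr (p.edges_dropUntil_subset hxs he)

lemma odd_closed_walk {V : Type*} {G : SimpleGraph V} :
    ∀ (N : ℕ) ⦃v : V⦄ (w : G.Walk v v), w.length ≤ N → Odd w.length →
      ∃ (u : V) (c : G.Walk u u), c.IsCycle ∧ Odd c.length ∧ c.length ≤ w.length ∧
        ∀ e ∈ c.edges, e ∈ w.edges := by
  classical
  intro N
  induction N with
  | zero =>
    intro v w hl ho
    rw [Nat.le_zero] at hl
    rw [hl] at ho
    simp at ho
  | succ N ih =>
    intro v w hl ho
    by_cases hnd : w.support.tail.Nodup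
    · cases w with
      | nil => simp at ho
      | @cons _ b _ h p =>
        have hp : p.IsPath := by
          rw [SimpleGraph.Walk.isPath_def]
          simpa [SimpleGraph.Walk.support_cons] using hnd
        by_cases he : s(v, b) ∈ p.edges
        · have h1 := path_edge_len p hp he
          rw [SimpleGraph.Walk.length_cons, h1] at ho
          simp [Nat.odd_iff] at ho
        · exact ⟨v, SimpleGraph.Walk.cons h p,
            (SimpleGraph.Walk.cons_isCycle_iff p h).2 ⟨hp, he⟩, ho, le_refl _, fun e a => a⟩
    · rw [← List.exists_duplicate_iff_not_nodup] at hnd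
      obtain ⟨x, hdup⟩ := hnd
      have hx : x ∈ w.support := List.mem_of_mem_tail hdup.mem
      have hql : (w.rotate x hx).length = w.length := by
        have := congrArg SimpleGraph.Walk.length (w.take_spec hx)
        simp only [SimpleGraph.Walk.length_append] at this
        simp only [SimpleGraph.Walk.rotate, SimpleGraph.Walk.length_append]
        omega
      have hqe : ∀ e ∈ (w.rotate x hx).edges, e ∈ w.edges :=
        fun e he => ((w.rotate_edges x hx).perm.mem_iff).1 he
      have hqc : 2 ≤ (w.rotate x hx).support.tail.count x := by
        rw [(w.support_rotate x hx).perm.count_eq]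
        exact List.duplicate_iff_two_le_count.mp hdup
      obtain ⟨c1, c2, hsum, h1len, h2len, h1e, h2e⟩ := split_closed (w.rotate x hx) hqc
      rw [hql] at hsum
      rcases Nat.even_or_odd c1.length with hev | hodd
      · have hodd2 : Odd c2.length := by
          rcases Nat.even_or_odd c2.length with hev2 | hodd2
          · exfalso
            rw [Nat.odd_iff] at ho
            rw [Nat.even_iff] at hev hev2
            omega
          · exact hodd2
        obtain ⟨u, c, hc, hco, hcl, hce⟩ := ih c2 (by omega) hodd2
        exact ⟨u, c, hc, hco, by omega, fun e he => hqe e (h2e e (hce e he))⟩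
      · obtain ⟨u, c, hc, hco, hcl, hce⟩ := ih c1 (by omega) hodd
        exact ⟨u, c, hc, hco, by omega, fun e he => hqe e (h1e e (hce e he))⟩

section Proj
variable {m n : ℕ} {α β : Type*}

lemma proj_fst {A : Sym2 (Fin m) → α} {B : Sym2 (Fin n) → β}
    (C : Sym2 (Fin m × Fin n) → α ⊕ β)
    (h2 : ∀ g h₁ h₂, h₁ ≠ h₂ → C s((g, h₁), (g, h₂)) = Sum.inr (B s(h₁, h₂)))
    (h1 : ∀ g₁ g₂ h, g₁ ≠ g₂ → C s((g₁, h), (g₂, h)) = Sum.inl (A s(g₁, g₂)))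
    (h3 : ∀ g₁ g₂ h₁ h₂, g₁ ≠ g₂ → h₁ ≠ h₂ →
      C s((g₁, h₁), (g₂, h₂)) = Sum.inl (A s(g₁, g₂)) ∨
      C s((g₁, h₁), (g₂, h₂)) = Sum.inr (B s(h₁, h₂)))
    (a : α) :
    ∀ {u v : Fin m × Fin n} (w : (⊤ : SimpleGraph (Fin m × Fin n)).Walk u v),
      (∀ e ∈ w.edges, C e = Sum.inl a) →
      ∃ w' : (⊤ : SimpleGraph (Fin m)).Walk u.1 v.1,
        w'.length = w.length ∧ ∀ e ∈ w'.edges, A e = a := by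
  intro u v w
  induction w with
  | nil => exact fun _ => ⟨SimpleGraph.Walk.nil, rfl, by simp⟩
  | @cons u b v h p ih =>
    intro hce
    have hce0 : C s(u, b) = Sum.inl a := hce _ (by simp)
    have hne1 : u.1 ≠ b.1 := by
      intro heq
      have hne2 : u.2 ≠ b.2 := by
        intro h2eq
        exact ((SimpleGraph.top_adj _ _).mp h) (Prod.ext heq h2eq)
      have := h2 u.1 u.2 b.2 hne2
      rw [show ((u.1, u.2) : Fin m × Fin n) = u from rfl] at this
      rw [show ((u.1, b.2) : Fin m × Fin n) = b from Prod.ext heq rfl] at this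
      rw [hce0] at this
      exact Sum.inl_ne_inr this
    have hA : A s(u.1, b.1) = a := by
      by_cases h2eq : u.2 = b.2
      · have := h1 u.1 b.1 u.2 hne1
        rw [show ((u.1, u.2) : Fin m × Fin n) = u from rfl,
          show ((b.1, u.2) : Fin m × Fin n) = b from Prod.ext rfl h2eq] at this
        rw [hce0] at this
        exact (Sum.inl_injective this).symm
      · rcases h3 u.1 b.1 u.2 b.2 hne1 h2eq with hc | hc
        · rw [show ((u.1, u.2) : Fin m × Fin n) = u from rfl,
            show ((b.1, b.2) : Fin m × Fin n) = b from rfl, hce0] at hc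
          exact (Sum.inl_injective hc).symm
        · rw [show ((u.1, u.2) : Fin m × Fin n) = u from rfl,
            show ((b.1, b.2) : Fin m × Fin n) = b from rfl, hce0] at hc
          exact absurd hc Sum.inl_ne_inr
    obtain ⟨w', hlen, hw'⟩ := ih (fun e he => hce e (by simp [he]))
    refine ⟨SimpleGraph.Walk.cons ((SimpleGraph.top_adj _ _).mpr hne1) w', by simp [hlen], ?_⟩
    intro e he
    rw [SimpleGraph.Walk.edges_cons, List.mem_cons] at he
    rcases he with rfl | he
    · exact hA
    · exact hw' e he

lemma proj_snd {A : Sym2 (Fin m) → α} {B : Sym2 (Fin n) → β}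
    (C : Sym2 (Fin m × Fin n) → α ⊕ β)
    (h2 : ∀ g h₁ h₂, h₁ ≠ h₂ → C s((g, h₁), (g, h₂)) = Sum.inr (B s(h₁, h₂)))
    (h1 : ∀ g₁ g₂ h, g₁ ≠ g₂ → C s((g₁, h), (g₂, h)) = Sum.inl (A s(g₁, g₂)))
    (h3 : ∀ g₁ g₂ h₁ h₂, g₁ ≠ g₂ → h₁ ≠ h₂ →
      C s((g₁, h₁), (g₂, h₂)) = Sum.inl (A s(g₁, g₂)) ∨
      C s((g₁, h₁), (g₂, h₂)) = Sum.inr (B s(h₁, h₂)))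
    (b : β) :
    ∀ {u v : Fin m × Fin n} (w : (⊤ : SimpleGraph (Fin m × Fin n)).Walk u v),
      (∀ e ∈ w.edges, C e = Sum.inr b) →
      ∃ w' : (⊤ : SimpleGraph (Fin n)).Walk u.2 v.2,
        w'.length = w.length ∧ ∀ e ∈ w'.edges, B e = b := by
  intro u v w
  induction w with
  | nil => exact fun _ => ⟨SimpleGraph.Walk.nil, rfl, by simp⟩
  | @cons u c v h p ih =>
    intro hce
    have hce0 : C s(u, c) = Sum.inr b := hce _ (by simp)
    have hne1 : u.2 ≠ c.2 := by
      intro heq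
      have hne2 : u.1 ≠ c.1 := by
        intro h1eq
        exact ((SimpleGraph.top_adj _ _).mp h) (Prod.ext h1eq heq)
      have := h1 u.1 c.1 u.2 hne2
      rw [show ((u.1, u.2) : Fin m × Fin n) = u from rfl] at this
      rw [show ((c.1, u.2) : Fin m × Fin n) = c from Prod.ext rfl heq] at this
      rw [hce0] at this
      exact Sum.inl_ne_inr this.symm
    have hB : B s(u.2, c.2) = b := by
      by_cases h1eq : u.1 = c.1
      · have := h2 u.1 u.2 c.2 hne1
        rw [show ((u.1, u.2) : Fin m × Fin n) = u from rfl,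
          show ((u.1, c.2) : Fin m × Fin n) = c from Prod.ext h1eq rfl] at this
        rw [hce0] at this
        exact (Sum.inr_injective this).symm
      · rcases h3 u.1 c.1 u.2 c.2 h1eq hne1 with hc | hc
        · rw [show ((u.1, u.2) : Fin m × Fin n) = u from rfl,
            show ((c.1, c.2) : Fin m × Fin n) = c from rfl, hce0] at hc
          exact absurd hc.symm Sum.inl_ne_inr
        · rw [show ((u.1, u.2) : Fin m × Fin n) = u from rfl,
            show ((c.1, c.2) : Fin m × Fin n) = c from rfl, hce0] at hc
          exact (Sum.inr_injective hc).symm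
    obtain ⟨w', hlen, hw'⟩ := ih (fun e he => hce e (by simp [he]))
    refine ⟨SimpleGraph.Walk.cons ((SimpleGraph.top_adj _ _).mpr hne1) w', by simp [hlen], ?_⟩
    intro e he
    rw [SimpleGraph.Walk.edges_cons, List.mem_cons] at he
    rcases he with rfl | he
    · exact hB
    · exact hw' e he
end Proj

/-- Product colourings preserve odd girth: if `A` colours `K_m` and `B` colours
`K_n` (in disjoint colours, modelled by the sum type `α ⊕ β`), both with no
monochromatic odd cycle of length less than `r`, then any product colouring
`C ∈ ×(A,B)` of `K_{m} × K_{n}` has no monochromatic odd cycle of length less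
than `r`. -/
theorem stmt10 (r m n : ℕ) {α β : Type*}
    (A : Sym2 (Fin m) → α) (B : Sym2 (Fin n) → β)
    (hA : ∀ (v : Fin m) (w : (⊤ : SimpleGraph (Fin m)).Walk v v),
      w.IsCycle → Odd w.length → (∃ c, ∀ e ∈ w.edges, A e = c) → r ≤ w.length)
    (hB : ∀ (v : Fin n) (w : (⊤ : SimpleGraph (Fin n)).Walk v v),
      w.IsCycle → Odd w.length → (∃ c, ∀ e ∈ w.edges, B e = c) → r ≤ w.length)
    (C : Sym2 (Fin m × Fin n) → α ⊕ β)
    (h1 : ∀ g₁ g₂ h, g₁ ≠ g₂ → C s((g₁, h), (g₂, h)) = Sum.inl (A s(g₁, g₂)))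
    (h2 : ∀ g h₁ h₂, h₁ ≠ h₂ → C s((g, h₁), (g, h₂)) = Sum.inr (B s(h₁, h₂)))
    (h3 : ∀ g₁ g₂ h₁ h₂, g₁ ≠ g₂ → h₁ ≠ h₂ →
      C s((g₁, h₁), (g₂, h₂)) = Sum.inl (A s(g₁, g₂)) ∨
      C s((g₁, h₁), (g₂, h₂)) = Sum.inr (B s(h₁, h₂))) :
    ∀ (v : Fin m × Fin n) (w : (⊤ : SimpleGraph (Fin m × Fin n)).Walk v v),
      w.IsCycle → Odd w.length → (∃ c, ∀ e ∈ w.edges, C e = c) → r ≤ w.length := by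
  rintro v w hcyc hodd ⟨col, hcol⟩
  rcases col with a | b
  · obtain ⟨w', hlen, hw'⟩ := proj_fst C h2 h1 h3 a w hcol
    obtain ⟨u, c, hc, hco, hcl, hce⟩ :=
      odd_closed_walk w'.length w' (le_refl _) (hlen ▸ hodd)
    have hr := hA u c hc hco ⟨a, fun e he => hw' e (hce e he)⟩
    omega
  · obtain ⟨w', hlen, hw'⟩ := proj_snd C h2 h1 h3 b w hcol
    obtain ⟨u, c, hc, hco, hcl, hce⟩ :=
      odd_closed_walk w'.length w' (le_refl _) (hlen ▸ hodd)
    have hr := hB u c hc hco ⟨b, fun e he => hw' e (hce e he)⟩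
    omega
end

section
/- Let r be an odd integer. If A is a colouring of the complete graph G with no monochromatic cycle of length r, and B is a colouring of the complete graph H (in disjoint colours) in which every monochromatic odd cycle has length strictly greater than r, then the product colouring A * B of G × H has no monochromatic cycle of length r. -/
open SimpleGraph

/-- Any closed walk of odd length contains an odd cycle among its edges. -/
lemma oddClosedWalk_cycle {V : Type*} {G : SimpleGraph V} :
    ∀ (N : ℕ) {v : V} (q : G.Walk v v), q.length ≤ N → Odd q.length →
      ∃ (u : V) (c : G.Walk u u), c.IsCycle ∧ Odd c.length ∧ c.length ≤ q.length ∧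
        ∀ e ∈ c.edges, e ∈ q.edges := by
  classical
  intro N
  induction N with
  | zero =>
    intro v q hle hodd
    interval_cases h : q.length
    · simp [Nat.odd_iff] at hodd
  | succ N ih =>
    intro v q hle hodd
    by_cases hnodup : q.support.tail.Nodup
    · -- q minus first edge is a path; q is a cycle unless length 2
      have hq0 : 0 < q.length := hodd.pos
      have hnn : ¬ q.Nil := SimpleGraph.Walk.not_nil_iff_lt_length.mpr hq0
      obtain ⟨y, hadj, p, rfl⟩ := SimpleGraph.Walk.not_nil_iff.mp hnn
      have hp : p.IsPath := by
        rw [SimpleGraph.Walk.isPath_def]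
        simpa using hnodup
      by_cases he : s(v, y) ∈ p.edges
      · -- then p.length = 1, contradicting oddness of length
        exfalso
        cases p with
        | nil => simp at he
        | cons h' p' =>
          rename_i z
          simp only [SimpleGraph.Walk.edges_cons, List.mem_cons] at he
          rcases he with he | he
          · have hz : z = v := by
              rw [Sym2.eq_iff] at he
              rcases he with ⟨h1, h2⟩ | ⟨h1, h2⟩
              · exact absurd h1 hadj.ne
              · exact h1.symm
            subst hz
            have hp' : p'.IsPath := hp.of_cons
            have : p' = SimpleGraph.Walk.nil := SimpleGraph.Walk.isPath_iff_eq_nil.mp hp'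
            subst this
            simp [Nat.odd_iff] at hodd
          · have hy : y ∈ p'.support := SimpleGraph.Walk.snd_mem_support_of_mem_edges p' he
            have := hp.support_nodup
            simp only [SimpleGraph.Walk.support_cons, List.nodup_cons] at this
            exact this.1 hy
      · refine ⟨v, SimpleGraph.Walk.cons hadj p, ?_, hodd, le_refl _, fun e he => he⟩
        exact (SimpleGraph.Walk.cons_isCycle_iff p hadj).mpr ⟨hp, he⟩
    · -- a repeated vertex in the tail: split into two shorter closed walks
      obtain ⟨x, hxdup⟩ := List.exists_duplicate_iff_not_nodup.mpr hnodup
      have hxcount : 2 ≤ q.support.tail.count x := List.duplicate_iff_two_le_count.mp hxdup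
      have hxmem : x ∈ q.support := List.mem_of_mem_tail hxdup.mem
      set c' := q.rotate x hxmem with hc'
      have hrot : c'.support.tail ~r q.support.tail := q.support_rotate x hxmem
      have hlen' : c'.length = q.length := by
        have h1 := c'.length_support
        have h2 := q.length_support
        have := hrot.perm.length_eq
        have e1 : c'.support.tail.length = c'.length := by
          have := c'.length_support
          cases hs : c'.support with
          | nil => exact absurd hs c'.support_ne_nil
          | cons a l => simp [hs] at this ⊢; omega
        have e2 : q.support.tail.length = q.length := by
          have := q.length_support
          cases hs : q.support with
          | nil => exact absurd hs q.support_ne_nil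
          | cons a l => simp [hs] at this ⊢; omega
        omega
      have hedges' : ∀ e ∈ c'.edges, e ∈ q.edges := fun e he =>
        (q.rotate_edges x hxmem).perm.mem_iff.mp he
      have hcount' : 2 ≤ c'.support.tail.count x := by
        rw [hrot.perm.count_eq]; exact hxcount
      have hnn : ¬ c'.Nil := SimpleGraph.Walk.not_nil_iff_lt_length.mpr (by
        rw [hlen']; exact hodd.pos)
      obtain ⟨y, hadj, p, hcp⟩ := SimpleGraph.Walk.not_nil_iff.mp hnn
      have hpsupp : c'.support.tail = p.support := by rw [hcp]; simp
      rw [hpsupp] at hcount'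
      have hxp : x ∈ p.support := List.count_pos_iff.mp (by omega)
      set t := p.takeUntil x hxp with ht
      set d := p.dropUntil x hxp with hd
      have hspec : t.append d = p := p.take_spec hxp
      have hlen_td : t.length + d.length = p.length := by
        rw [← hspec, SimpleGraph.Walk.length_append]
      have hplen : p.length + 1 = q.length := by
        have : c'.length = p.length + 1 := by rw [hcp]; simp [Nat.add_comm]
        omega
      -- d is not nil
      have hcnt1 : t.support.count x = 1 := p.count_support_takeUntil_eq_one hxp
      have hsup : p.support = t.support ++ d.support.tail := by
        rw [← hspec, SimpleGraph.Walk.support_append]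
      have hdpos : 0 < d.length := by
        rcases Nat.eq_zero_or_pos d.length with h0 | h
        swap
        · exact h
        exfalso
        have hdt : d.support.tail = [] := by
          have hl := d.length_support
          rw [h0] at hl
          cases hs : d.support with
          | nil => exact absurd hs d.support_ne_nil
          | cons a l =>
            rw [hs] at hl
            simp at hl
            simp [hl]
        rw [hsup, hdt, List.append_nil, hcnt1] at hcount'
        omega
      -- the two closed walks
      set c₁ : G.Walk x x := SimpleGraph.Walk.cons hadj t with hc₁
      have hc₁len : c₁.length = t.length + 1 := by simp [hc₁]
      have hsum : c₁.length + d.length = q.length := by omega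
      have hc₁edges : ∀ e ∈ c₁.edges, e ∈ q.edges := by
        intro e he
        apply hedges'
        rw [hcp]
        simp only [hc₁, SimpleGraph.Walk.edges_cons, List.mem_cons] at he
        simp only [SimpleGraph.Walk.edges_cons, List.mem_cons]
        rcases he with he | he
        · exact Or.inl he
        · exact Or.inr (p.edges_takeUntil_subset hxp he)
      have hdedges : ∀ e ∈ d.edges, e ∈ q.edges := by
        intro e he
        apply hedges'
        rw [hcp]
        simp only [SimpleGraph.Walk.edges_cons, List.mem_cons]
        exact Or.inr (p.edges_dropUntil_subset hxp he)
      rcases Nat.even_or_odd c₁.length with hev | hod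
      · -- then d has odd length
        have hdodd : Odd d.length := by
          rw [Nat.odd_iff] at hodd ⊢
          rw [Nat.even_iff] at hev
          omega
        have hdle : d.length ≤ N := by omega
        obtain ⟨u, c, hcyc, hco, hcl, hce⟩ := ih d hdle hdodd
        exact ⟨u, c, hcyc, hco, by omega, fun e he => hdedges e (hce e he)⟩
      · have hc₁le : c₁.length ≤ N := by omega
        obtain ⟨u, c, hcyc, hco, hcl, hce⟩ := ih c₁ hc₁le hod
        exact ⟨u, c, hcyc, hco, by omega, fun e he => hc₁edges e (hce e he)⟩

section Proj

variable {m n : ℕ} {α β : Type*} {A : Sym2 (Fin m) → α} {B : Sym2 (Fin n) → β}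
  {C : Sym2 (Fin m × Fin n) → α ⊕ β}

/-- Projection to the second coordinate of a walk all of whose edges are `inr`-coloured. -/
lemma projB (h1 : ∀ g₁ g₂ h, g₁ ≠ g₂ → C s((g₁, h), (g₂, h)) = Sum.inl (A s(g₁, g₂)))
    (h2 : ∀ g₁ g₂ h₁ h₂, h₁ ≠ h₂ → C s((g₁, h₁), (g₂, h₂)) = Sum.inr (B s(h₁, h₂)))
    (bb : β) :
    ∀ {a b : Fin m × Fin n} (p : (⊤ : SimpleGraph (Fin m × Fin n)).Walk a b),
      (∀ e ∈ p.edges, C e = Sum.inr bb) →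
      ∃ q : (⊤ : SimpleGraph (Fin n)).Walk a.2 b.2,
        q.length = p.length ∧ ∀ e ∈ q.edges, B e = bb := by
  intro a b p
  induction p with
  | nil => exact fun _ => ⟨SimpleGraph.Walk.nil, rfl, by simp⟩
  | cons hadj p₂ ih =>
    rename_i u z w
    intro hcol
    have hcz : C s(u, z) = Sum.inr bb := hcol _ (by simp)
    have hne2 : u.2 ≠ z.2 := by
      intro hsnd
      have hne : u ≠ z := (SimpleGraph.top_adj _ _).mp hadj
      have hne1 : u.1 ≠ z.1 := fun h => hne (Prod.ext h hsnd)
      have := h1 u.1 z.1 u.2 hne1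
      rw [show ((u.1, u.2) : Fin m × Fin n) = u from rfl, hsnd,
        show ((z.1, z.2) : Fin m × Fin n) = z from rfl] at this
      rw [this] at hcz
      exact Sum.inl_ne_inr hcz
    obtain ⟨q₂, hql, hqc⟩ := ih (fun e he => hcol e (by simp [he]))
    refine ⟨SimpleGraph.Walk.cons ((SimpleGraph.top_adj _ _).mpr hne2) q₂, by simp [hql], ?_⟩
    intro e he
    simp only [SimpleGraph.Walk.edges_cons, List.mem_cons] at he
    rcases he with rfl | he
    · have := h2 u.1 z.1 u.2 z.2 hne2
      rw [show ((u.1, u.2) : Fin m × Fin n) = u from rfl,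
        show ((z.1, z.2) : Fin m × Fin n) = z from rfl] at this
      rw [this] at hcz
      exact (Sum.inr.inj hcz).symm ▸ rfl
    · exact hqc e he

/-- All vertices of a walk whose edges are `inl`-coloured share the second coordinate. -/
lemma suppA (h2 : ∀ g₁ g₂ h₁ h₂, h₁ ≠ h₂ → C s((g₁, h₁), (g₂, h₂)) = Sum.inr (B s(h₁, h₂)))
    (aa : α) :
    ∀ {a b : Fin m × Fin n} (p : (⊤ : SimpleGraph (Fin m × Fin n)).Walk a b),
      (∀ e ∈ p.edges, C e = Sum.inl aa) → ∀ z ∈ p.support, z.2 = a.2 := by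
  intro a b p
  induction p with
  | nil => intro _ z hz; simp at hz; subst hz; rfl
  | cons hadj p₂ ih =>
    rename_i u y w
    intro hcol z hz
    have hcz : C s(u, y) = Sum.inl aa := hcol _ (by simp)
    have heq : y.2 = u.2 := by
      by_contra hne
      have := h2 u.1 y.1 u.2 y.2 (fun h => hne h.symm)
      rw [show ((u.1, u.2) : Fin m × Fin n) = u from rfl,
        show ((y.1, y.2) : Fin m × Fin n) = y from rfl] at this
      rw [this] at hcz
      exact Sum.inr_ne_inl hcz
    simp only [SimpleGraph.Walk.support_cons, List.mem_cons] at hz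
    rcases hz with rfl | hz
    · rfl
    · rw [ih (fun e he => hcol e (by simp [he])) z hz, heq]

/-- Pull back a walk whose vertices all lie in one copy of `K_m`. -/
lemma pullA (h₀ : Fin n) :
    ∀ {a b : Fin m × Fin n} (p : (⊤ : SimpleGraph (Fin m × Fin n)).Walk a b),
      (∀ z ∈ p.support, z.2 = h₀) →
      ∃ q : (⊤ : SimpleGraph (Fin m)).Walk a.1 b.1,
        q.length = p.length ∧
        q.support.map (fun g => ((g, h₀) : Fin m × Fin n)) = p.support ∧
        q.edges.map (Sym2.map (fun g => ((g, h₀) : Fin m × Fin n))) = p.edges := by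
  have peq : ∀ x : Fin m × Fin n, x.2 = h₀ → ((x.1, h₀) : Fin m × Fin n) = x := by
    intro x hx; rw [← hx]
  intro a b p
  induction p with
  | nil =>
    rename_i u
    intro hs
    have hu : u.2 = h₀ := hs u (by simp)
    refine ⟨SimpleGraph.Walk.nil, rfl, ?_, by simp⟩
    simp only [SimpleGraph.Walk.support_nil, List.map_cons, List.map_nil]
    rw [peq u hu]
  | cons hadj p₂ ih =>
    rename_i u z w
    intro hs
    have hu : u.2 = h₀ := hs u (by simp)
    have hz : z.2 = h₀ := hs z (by simp [SimpleGraph.Walk.support_cons])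
    have hne : u ≠ z := (SimpleGraph.top_adj _ _).mp hadj
    have hne1 : u.1 ≠ z.1 := fun h => hne (Prod.ext h (hu.trans hz.symm))
    obtain ⟨q₂, hl, hsup, hedg⟩ := ih (fun x hx => hs x (by simp [hx]))
    refine ⟨SimpleGraph.Walk.cons ((SimpleGraph.top_adj _ _).mpr hne1) q₂, by simp [hl], ?_, ?_⟩
    · simp only [SimpleGraph.Walk.support_cons, List.map_cons, hsup]
      congr 1
      exact peq u hu
    · simp only [SimpleGraph.Walk.edges_cons, List.map_cons, hedg]
      congr 1
      rw [Sym2.map_pair_eq, peq u hu, peq z hz]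

end Proj

/-- If `A` is a `C_r`-free colouring of `K_m` (`r` odd) and `B` is a colouring of
`K_n` (in disjoint colours, modelled by the sum type `α ⊕ β`) in which every
monochromatic odd cycle has length strictly greater than `r`, then the product
colouring `A * B` of `K_m × K_n` (edges within a copy of `K_m` coloured by `A`,
all edges whose second coordinates differ coloured by `B`) is `C_r`-free. -/
theorem stmt11 (r m n : ℕ) (hr : Odd r) {α β : Type*}
    (A : Sym2 (Fin m) → α) (B : Sym2 (Fin n) → β)
    (hA : ¬∃ (v : Fin m) (w : (⊤ : SimpleGraph (Fin m)).Walk v v),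
      w.IsCycle ∧ w.length = r ∧ ∃ c, ∀ e ∈ w.edges, A e = c)
    (hB : ∀ (v : Fin n) (w : (⊤ : SimpleGraph (Fin n)).Walk v v),
      w.IsCycle → Odd w.length → (∃ c, ∀ e ∈ w.edges, B e = c) → r < w.length)
    (C : Sym2 (Fin m × Fin n) → α ⊕ β)
    (h1 : ∀ g₁ g₂ h, g₁ ≠ g₂ → C s((g₁, h), (g₂, h)) = Sum.inl (A s(g₁, g₂)))
    (h2 : ∀ g₁ g₂ h₁ h₂, h₁ ≠ h₂ → C s((g₁, h₁), (g₂, h₂)) = Sum.inr (B s(h₁, h₂))) :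
    ¬∃ (v : Fin m × Fin n) (w : (⊤ : SimpleGraph (Fin m × Fin n)).Walk v v),
      w.IsCycle ∧ w.length = r ∧ ∃ c, ∀ e ∈ w.edges, C e = c := by
  rintro ⟨v, w, hcyc, hlen, c, hc⟩
  cases c with
  | inl aa =>
    have hs : ∀ z ∈ w.support, z.2 = v.2 := suppA h2 aa w hc
    obtain ⟨q, hl, hsup, hedg⟩ := pullA v.2 w hs
    apply hA
    refine ⟨v.1, q, ?_, by rw [hl, hlen], aa, ?_⟩
    · rw [SimpleGraph.Walk.isCycle_def] at hcyc ⊢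
      obtain ⟨htrail, hne, htail⟩ := hcyc
      refine ⟨?_, ?_, ?_⟩
      · rw [SimpleGraph.Walk.isTrail_def] at htrail ⊢
        rw [← hedg] at htrail
        exact htrail.of_map _
      · intro h
        rw [h] at hl
        simp only [SimpleGraph.Walk.length_nil] at hl
        rw [hlen] at hl
        have := hr.pos
        omega
      · rw [← hsup, ← List.map_tail] at htail
        exact htail.of_map _
    · intro e he
      induction e using Sym2.ind with
      | _ g₁ g₂ =>
        have hmem : Sym2.map (fun g => ((g, v.2) : Fin m × Fin n)) s(g₁, g₂) ∈ w.edges := by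
          rw [← hedg]
          exact List.mem_map_of_mem he
        have hC := hc _ hmem
        have hne12 : g₁ ≠ g₂ := (SimpleGraph.top_adj _ _).mp (q.adj_of_mem_edges he)
        rw [Sym2.map_pair_eq, h1 g₁ g₂ v.2 hne12] at hC
        exact Sum.inl.inj hC
  | inr bb =>
    obtain ⟨q, hl, hqc⟩ := projB h1 h2 bb w hc
    have hodd : Odd q.length := by rw [hl, hlen]; exact hr
    obtain ⟨u, cw, hcyc', hco, hcl, hce⟩ := oddClosedWalk_cycle q.length q le_rfl hodd
    have hlt := hB u cw hcyc' hco ⟨bb, fun e he => hqc e (hce e he)⟩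
    rw [hl, hlen] at hcl
    omega
end

section
/- Suppose for some odd r and some integer f there exists an f-colouring of K_{2^f+1} with all monochromatic odd cycles of length strictly greater than r, and for integers c with 0 ≤ c < f there exists a (c+1)-colouring of K_{(r-1)2^c} with no monochromatic C_r. Then for every k ≥ 1, writing k - 1 = m f + c with 0 ≤ c < f, there exists a k-colouring of the complete graph on (r-1)·2^c·(2^f+1)^m vertices with no monochromatic cycle of length r. -/
open SimpleGraph

section Aux

variable {V : Type*} {G : SimpleGraph V}

lemma my_loop_edge_not_mem {u v : V} (p : G.Walk u v) (hnd : p.support.Nodup)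
    (hl : 2 ≤ p.length) : s(v, u) ∉ p.edges := by
  cases p with
  | nil => simp at hl
  | @cons _ w _ h q =>
    simp only [Walk.edges_cons, List.mem_cons, not_or]
    constructor
    · intro he
      rw [Sym2.eq_iff] at he
      rcases he with ⟨hvu, huw⟩ | ⟨hvw, -⟩
      · exact G.irrefl (huw ▸ h)
      · subst hvw
        have hq : q.support.Nodup := by
          rw [Walk.support_cons, List.nodup_cons] at hnd
          exact hnd.2
        have hpath : q.IsPath := Walk.IsPath.mk' hq
        have : (⟨q, hpath⟩ : G.Path v v) = SimpleGraph.Path.nil := SimpleGraph.Path.loop_eq _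
        have hq0 : q = Walk.nil := congrArg Subtype.val this
        rw [hq0] at hl
        simp at hl
    · intro he
      have hu : u ∈ q.support := Walk.snd_mem_support_of_mem_edges q he
      rw [Walk.support_cons, List.nodup_cons] at hnd
      exact hnd.1 hu

lemma my_isCycle_of_tail_nodup {v : V} (w : G.Walk v v) (h3 : 3 ≤ w.length)
    (hnd : w.support.tail.Nodup) : w.IsCycle := by
  cases w with
  | nil => simp at h3
  | cons h q =>
    rw [Walk.cons_isCycle_iff]
    have hq : q.support.Nodup := by simpa using hnd
    refine ⟨Walk.IsPath.mk' hq, my_loop_edge_not_mem q hq ?_⟩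
    simp only [Walk.length_cons] at h3
    omega

lemma my_split_closed [DecidableEq V] {x : V} (c : G.Walk x x)
    (hc : 2 ≤ c.support.tail.count x) :
    ∃ (c1 c2 : G.Walk x x), c1.length + c2.length = c.length ∧
      0 < c1.length ∧ 0 < c2.length := by
  cases c with
  | nil => simp at hc
  | cons h q =>
    have hcq : 2 ≤ q.support.count x := by simpa using hc
    have hxq : x ∈ q.support := by
      by_contra hh
      rw [List.count_eq_zero_of_not_mem hh] at hcq
      omega
    refine ⟨Walk.cons h (q.takeUntil x hxq), q.dropUntil x hxq, ?_, by simp, ?_⟩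
    · have hspec := congrArg Walk.length (q.take_spec hxq)
      rw [Walk.length_append] at hspec
      simp only [Walk.length_cons]
      omega
    · have hs := congrArg Walk.support (q.take_spec hxq)
      rw [Walk.support_append] at hs
      have h1 : (q.takeUntil x hxq).support.count x = 1 :=
        q.count_support_takeUntil_eq_one hxq
      have h2 : 1 ≤ ((q.dropUntil x hxq).support.tail.count x) := by
        have hcnt := congrArg (List.count x) hs
        rw [List.count_append] at hcnt
        omega
      have h3 : (q.dropUntil x hxq).support.tail ≠ [] := by
        intro hnil; rw [hnil] at h2; simp at h2
      have h4 : (q.dropUntil x hxq).support.length = (q.dropUntil x hxq).length + 1 :=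
        Walk.length_support _
      have h5 : 0 < (q.dropUntil x hxq).support.tail.length := List.length_pos_iff.mpr h3
      rw [List.length_tail] at h5
      omega

lemma my_odd_closed_walk_cycle [DecidableEq V] :
    ∀ (n : ℕ) {v : V} (w : G.Walk v v), w.length = n → Odd n →
      ∃ (u : V) (cw : G.Walk u u), cw.IsCycle ∧ Odd cw.length ∧ cw.length ≤ n := by
  intro n
  induction n using Nat.strong_induction_on with
  | _ n ih =>
    intro v w hl hodd
    by_cases hnd : w.support.tail.Nodup
    · have h3 : 3 ≤ w.length := by
        obtain ⟨t, ht⟩ := hodd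
        cases w with
        | nil => simp at hl; omega
        | cons h q =>
          cases q with
          | nil => exact absurd rfl h.ne
          | cons h' q' =>
            simp only [Walk.length_cons] at hl ⊢
            omega
      exact ⟨v, w, my_isCycle_of_tail_nodup w h3 hnd, hl ▸ hodd, le_of_eq hl⟩
    · obtain ⟨x, hx⟩ : ∃ x, 2 ≤ w.support.tail.count x := by
        by_contra hcon
        push_neg at hcon
        exact hnd (List.nodup_iff_count_le_one.mpr fun x => by have := hcon x; omega)
      have hxs : x ∈ w.support := by
        have h0 : x ∈ w.support.tail := by
          by_contra hh
          rw [List.count_eq_zero_of_not_mem hh] at hx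
          omega
        rw [Walk.support_eq_cons]
        exact List.mem_cons_of_mem _ h0
      have hlen2 : (w.rotate x hxs).length = n := by
        have hp := (Walk.rotate_darts w x hxs).perm.length_eq
        rw [Walk.length_darts, Walk.length_darts] at hp
        omega
      have hcnt : 2 ≤ (w.rotate x hxs).support.tail.count x := by
        rw [(Walk.support_rotate w x hxs).perm.count_eq]
        exact hx
      obtain ⟨c1, c2, hsum, h1, h2⟩ := my_split_closed (w.rotate x hxs) hcnt
      rw [hlen2] at hsum
      rcases Nat.even_or_odd c1.length with he | ho
      · have ho2 : Odd c2.length := by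
          rw [Nat.even_iff] at he
          rw [Nat.odd_iff] at hodd ⊢
          omega
        obtain ⟨u, cw, hc, hoo, hle⟩ := ih c2.length (by omega) c2 rfl ho2
        exact ⟨u, cw, hc, hoo, by omega⟩
      · obtain ⟨u, cw, hc, hoo, hle⟩ := ih c1.length (by omega) c1 rfl ho
        exact ⟨u, cw, hc, hoo, by omega⟩

end Aux

lemma my_projWalk {U X : Type*} (φ : U → X) :
    ∀ {a b : U} (w : (⊤ : SimpleGraph U).Walk a b),
      (∀ e ∈ w.edges, ¬ (e.map φ).IsDiag) →
      ∃ w' : (⊤ : SimpleGraph X).Walk (φ a) (φ b),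
        w'.length = w.length ∧ w'.edges = w.edges.map (Sym2.map φ) ∧
        w'.support = w.support.map φ := by
  intro a b w
  induction w with
  | nil => exact fun _ => ⟨Walk.nil, by simp, by simp, by simp⟩
  | @cons a z b h p ih =>
    intro hcond
    have hadj : (⊤ : SimpleGraph X).Adj (φ a) (φ z) := by
      have := hcond s(a, z) (by simp)
      rw [Sym2.map_pair_eq, Sym2.mk_isDiag_iff] at this
      simpa using this
    obtain ⟨w', h1, h2, h3⟩ := ih (fun e he => hcond e (by simp [he]))
    exact ⟨Walk.cons hadj w', by simp [h1], by simp [h2, Sym2.map_pair_eq],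
      by simp [h3]⟩

lemma my_fst_const {α β : Type*} {a b : α × β} :
    ∀ (w : (⊤ : SimpleGraph (α × β)).Walk a b),
      (∀ e ∈ w.edges, (e.map Prod.fst).IsDiag) → ∀ x ∈ w.support, x.1 = a.1 := by
  intro w
  induction w with
  | nil =>
    intro _ x hx
    simp only [Walk.support_nil, List.mem_singleton] at hx
    rw [hx]
  | @cons a z b h p ih =>
    intro hcond x hx
    rw [Walk.support_cons, List.mem_cons] at hx
    rcases hx with rfl | hx
    · rfl
    · have hz : z.1 = a.1 := by
        have := hcond s(a, z) (by simp)
        rw [Sym2.map_pair_eq, Sym2.mk_isDiag_iff] at this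
        exact this.symm
      rw [← hz]
      exact ih (fun e he => hcond e (by simp [he])) x hx







/-- `C_r`-freeness of an edge colouring of the complete graph. -/
def MyCFree (r : ℕ) {V K : Type*} (C : Sym2 V → K) : Prop :=
  ¬∃ (v : V) (w : (⊤ : SimpleGraph V).Walk v v),
    w.IsCycle ∧ w.length = r ∧ ∃ i, ∀ e ∈ w.edges, C e = i

variable {V V' K K' : Type*} in
lemma my_transport (e : V ≃ V') (g : K → K')
    (hg : Function.Injective g) {r : ℕ} (C : Sym2 V → K) (h : MyCFree r C) :
    MyCFree r (fun s => g (C (s.map e.symm))) := by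
  rintro ⟨v, w, hcyc, hlen, i, hmono⟩
  have hdiag : ∀ e' ∈ w.edges, ¬ (e'.map e.symm).IsDiag := by
    intro e' he'
    induction e' using Sym2.ind with
    | _ x y =>
      have hxy : x ≠ y := by
        have := w.edges_subset_edgeSet he'
        simpa using this
      rw [Sym2.map_pair_eq, Sym2.mk_isDiag_iff]
      exact fun hh => hxy (e.symm.injective hh)
  obtain ⟨w', hlen', hedges', hsupp'⟩ := my_projWalk e.symm w hdiag
  have hcyc' : w'.IsCycle := by
    refine my_isCycle_of_tail_nodup w' (by rw [hlen']; exact hcyc.three_le_length) ?_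
    rw [hsupp', ← List.map_tail]
    exact hcyc.support_nodup.map e.symm.injective
  have hne : w.edges ≠ [] := by
    intro hnil
    have := w.length_edges
    rw [hnil] at this
    have h3 := hcyc.three_le_length
    simp at this
    omega
  obtain ⟨e0, rest, hE⟩ := List.exists_cons_of_ne_nil hne
  refine h ⟨e.symm v, w', hcyc', by rw [hlen', hlen], C (e0.map e.symm), ?_⟩
  intro e'' he''
  rw [hedges'] at he''
  obtain ⟨e1, he1, rfl⟩ := List.mem_map.mp he''
  have h1 := hmono e1 he1
  have h0 := hmono e0 (by rw [hE]; exact List.mem_cons_self)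
  exact hg (h1.trans h0.symm)

lemma my_step {α β KA KB : Type*} [DecidableEq α] [DecidableEq β] (r : ℕ) (hr : Odd r)
    (A : Sym2 α → KA)
    (hA : ∀ (v : α) (w : (⊤ : SimpleGraph α).Walk v v), w.IsCycle → Odd w.length →
      (∃ c0, ∀ e ∈ w.edges, A e = c0) → r < w.length)
    (B : Sym2 β → KB) (hB : MyCFree r B) :
    ∃ C : Sym2 (α × β) → KB ⊕ KA, MyCFree r C := by
  classical
  set C : Sym2 (α × β) → KB ⊕ KA := Sym2.lift
    ⟨fun p q => if p.1 = q.1 then Sum.inl (B s(p.2, q.2)) else Sum.inr (A s(p.1, q.1)),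
     by
      intro p q
      dsimp only
      by_cases h : p.1 = q.1
      · rw [if_pos h, if_pos h.symm, Sym2.eq_swap]
      · rw [if_neg h, if_neg (fun hh => h hh.symm), Sym2.eq_swap]⟩ with hCdef
  have hC : ∀ x y : α × β, C s(x, y) =
      (if x.1 = y.1 then Sum.inl (B s(x.2, y.2)) else Sum.inr (A s(x.1, y.1))) := by
    intro x y
    rw [hCdef, Sym2.lift_mk]
  refine ⟨C, ?_⟩
  rintro ⟨v, w, hcyc, hlen, i, hmono⟩
  have hnever : ∀ x y : α × β, s(x, y) ∈ w.edges → x ≠ y := by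
    intro x y hxy
    have := w.edges_subset_edgeSet hxy
    simpa using this
  match i with
  | Sum.inl j =>
    have hedge : ∀ x y : α × β, s(x, y) ∈ w.edges → x.1 = y.1 ∧ B s(x.2, y.2) = j := by
      intro x y hxy
      have hm := hmono _ hxy
      rw [hC x y] at hm
      by_cases hft : x.1 = y.1
      · rw [if_pos hft] at hm; exact ⟨hft, by simpa using hm⟩
      · rw [if_neg hft] at hm; simp at hm
    have hfst : ∀ x ∈ w.support, x.1 = v.1 := by
      refine my_fst_const w ?_
      intro e he
      induction e using Sym2.ind with
      | _ x y =>
        rw [Sym2.map_pair_eq, Sym2.mk_isDiag_iff]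
        exact (hedge x y he).1
    have hdiag : ∀ e ∈ w.edges, ¬ (e.map Prod.snd).IsDiag := by
      intro e he
      induction e using Sym2.ind with
      | _ x y =>
        rw [Sym2.map_pair_eq, Sym2.mk_isDiag_iff]
        intro h2
        exact hnever x y he (Prod.ext (hedge x y he).1 h2)
    obtain ⟨w', hlen', hedges', hsupp'⟩ := my_projWalk Prod.snd w hdiag
    have hcyc' : w'.IsCycle := by
      refine my_isCycle_of_tail_nodup w'
        (by rw [hlen']; exact hcyc.three_le_length) ?_
      rw [hsupp', ← List.map_tail]
      refine List.Nodup.map_on ?_ hcyc.support_nodup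
      intro x hx y hy hxy
      have hx' : x ∈ w.support := List.mem_of_mem_tail hx
      have hy' : y ∈ w.support := List.mem_of_mem_tail hy
      exact Prod.ext ((hfst x hx').trans (hfst y hy').symm) hxy
    refine hB ⟨v.2, w', hcyc', by rw [hlen', hlen], j, ?_⟩
    intro e'' he''
    rw [hedges'] at he''
    obtain ⟨e1, he1, rfl⟩ := List.mem_map.mp he''
    induction e1 using Sym2.ind with
    | _ x y =>
      rw [Sym2.map_pair_eq]
      exact (hedge x y he1).2
  | Sum.inr j =>
    have hedge : ∀ x y : α × β, s(x, y) ∈ w.edges → x.1 ≠ y.1 ∧ A s(x.1, y.1) = j := by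
      intro x y hxy
      have hm := hmono _ hxy
      rw [hC x y] at hm
      by_cases hft : x.1 = y.1
      · rw [if_pos hft] at hm; simp at hm
      · rw [if_neg hft] at hm; exact ⟨hft, by simpa using hm⟩
    have hdiag : ∀ e ∈ w.edges, ¬ (e.map Prod.fst).IsDiag := by
      intro e he
      induction e using Sym2.ind with
      | _ x y =>
        rw [Sym2.map_pair_eq, Sym2.mk_isDiag_iff]
        exact (hedge x y he).1
    obtain ⟨w', hlen', hedges', -⟩ := my_projWalk Prod.fst w hdiag
    have hsub : ∀ e ∈ w'.edges, e ∈ (SimpleGraph.fromRel (fun a b => A s(a, b) = j)).edgeSet := by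
      intro e he
      rw [hedges'] at he
      obtain ⟨e1, he1, rfl⟩ := List.mem_map.mp he
      induction e1 using Sym2.ind with
      | _ x y =>
        rw [Sym2.map_pair_eq, SimpleGraph.mem_edgeSet, SimpleGraph.fromRel_adj]
        exact ⟨(hedge x y he1).1, Or.inl (hedge x y he1).2⟩
    have hl2 : (w'.transfer _ hsub).length = r := by
      rw [Walk.length_transfer, hlen', hlen]
    obtain ⟨u, cw, hcyc2, hodd2, hle2⟩ :=
      my_odd_closed_walk_cycle r (w'.transfer _ hsub) hl2 hr
    have hsub2 : ∀ e ∈ cw.edges, e ∈ (⊤ : SimpleGraph α).edgeSet := by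
      intro e he
      have hE := cw.edges_subset_edgeSet he
      induction e using Sym2.ind with
      | _ x y =>
        rw [SimpleGraph.mem_edgeSet, SimpleGraph.fromRel_adj] at hE
        simpa using hE.1
    have hcyc3 : (cw.transfer ⊤ hsub2).IsCycle := hcyc2.transfer hsub2
    have hmono3 : ∀ e ∈ (cw.transfer ⊤ hsub2).edges, A e = j := by
      intro e he
      rw [Walk.edges_transfer] at he
      have hE := cw.edges_subset_edgeSet he
      induction e using Sym2.ind with
      | _ x y =>
        rw [SimpleGraph.mem_edgeSet, SimpleGraph.fromRel_adj] at hE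
        rcases hE.2 with h1 | h2
        · exact h1
        · rw [Sym2.eq_swap]; exact h2
    have hfin := hA u (cw.transfer ⊤ hsub2) hcyc3
      (by rw [Walk.length_transfer]; exact hodd2) ⟨j, hmono3⟩
    rw [Walk.length_transfer] at hfin
    omega

/-- Given an `f`-colouring of `K_{2^f+1}` with all monochromatic odd cycles of
length `> r` (`r` odd), and for each `c < f` a `C_r`-free `(c+1)`-colouring of
`K_{(r-1)·2^c}`, then for every `k ≥ 1`, writing `k - 1 = m·f + c` with `c < f`,
there is a `C_r`-free `k`-colouring of the complete graph on
`(r-1)·2^c·(2^f+1)^m` vertices. -/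
theorem stmt13 (r f : ℕ) (hr : Odd r)
    (hA : ∃ A : Sym2 (Fin (2 ^ f + 1)) → Fin f,
      ∀ (v : Fin (2 ^ f + 1)) (w : (⊤ : SimpleGraph (Fin (2 ^ f + 1))).Walk v v),
        w.IsCycle → Odd w.length → (∃ c, ∀ e ∈ w.edges, A e = c) → r < w.length)
    (hB : ∀ c : ℕ, c < f →
      ∃ B : Sym2 (Fin ((r - 1) * 2 ^ c)) → Fin (c + 1),
        ¬∃ (v : Fin ((r - 1) * 2 ^ c))
            (w : (⊤ : SimpleGraph (Fin ((r - 1) * 2 ^ c))).Walk v v),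
          w.IsCycle ∧ w.length = r ∧ ∃ i, ∀ e ∈ w.edges, B e = i) :
    ∀ k m c : ℕ, 1 ≤ k → c < f → k - 1 = m * f + c →
      ∃ C : Sym2 (Fin ((r - 1) * 2 ^ c * (2 ^ f + 1) ^ m)) → Fin k,
        ¬∃ (v : Fin ((r - 1) * 2 ^ c * (2 ^ f + 1) ^ m))
            (w : (⊤ : SimpleGraph (Fin ((r - 1) * 2 ^ c * (2 ^ f + 1) ^ m))).Walk v v),
          w.IsCycle ∧ w.length = r ∧ ∃ i, ∀ e ∈ w.edges, C e = i := by
  obtain ⟨A, hA'⟩ := hA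
  have main : ∀ c : ℕ, c < f → ∀ m : ℕ,
      ∃ C : Sym2 (Fin ((r - 1) * 2 ^ c * (2 ^ f + 1) ^ m)) → Fin (c + 1 + m * f),
        MyCFree r C := by
    intro c hc m
    induction m with
    | zero =>
      obtain ⟨B, hBf⟩ := hB c hc
      exact ⟨_, my_transport (finCongr (by rw [pow_zero, mul_one]))
        (finCongr (by ring)) (finCongr (by ring : c + 1 = c + 1 + 0 * f)).injective B hBf⟩
    | succ m ihm =>
      obtain ⟨Cm, hCm⟩ := ihm
      obtain ⟨C', hC'⟩ := my_step r hr A hA' Cm hCm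
      refine ⟨_, my_transport
        (finProdFinEquiv.trans (finCongr (by ring)) :
          Fin (2 ^ f + 1) × Fin ((r - 1) * 2 ^ c * (2 ^ f + 1) ^ m) ≃
            Fin ((r - 1) * 2 ^ c * (2 ^ f + 1) ^ (m + 1)))
        (finSumFinEquiv.trans (finCongr (by ring)) :
          Fin (c + 1 + m * f) ⊕ Fin f ≃ Fin (c + 1 + (m + 1) * f))
        (Equiv.injective _) C' hC'⟩
  intro k m c hk hc hkeq
  obtain ⟨C, hC⟩ := main c hc m
  have hkk : c + 1 + m * f = k := by omega
  exact ⟨_, my_transport (Equiv.refl _) (finCongr hkk) (finCongr hkk).injective C hC⟩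
end

section
/- Define the sequence r_2 = (5,5) and for j > 2 let r_j be the increasing rearrangement of f(r_{j-1}), where f((r_1,...,r_k)) = (r_1+2, r_2, ..., r_k, 2r_1 - 1) applied with r_1 minimal. Let p(t) = ∏_{i=0}^{t-2} (2^i + 1). Then for all t ≥ 2, the minimum entry of r_{p(t)} is at least 2^t + 1. -/
/-- The operation `f`: add 2 to the first (minimal) entry of a sorted sequence
and append `2·(minimal entry) − 1`. -/
def roundStep : List ℕ → List ℕ
  | [] => []
  | a :: t => (a + 2) :: (t ++ [2 * a - 1])

/-- `seqRRC j` is the sequence `r_{j+2}`: `r_2 = (5,5)`, and `r_{j+1}` is the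
increasing rearrangement of `f(r_j)`. -/
def seqRRC : ℕ → List ℕ
  | 0 => [5, 5]
  | j + 1 => (roundStep (seqRRC j)).insertionSort (· ≤ ·)

/-- `p t = ∏_{i=0}^{t-2} (2^i + 1)`. -/
def pProd (t : ℕ) : ℕ := ∏ i ∈ Finset.range (t - 1), (2 ^ i + 1)

namespace RRCAux

lemma mem_seqRRC_succ {x : ℕ} {j : ℕ} :
    x ∈ seqRRC (j + 1) ↔ x ∈ roundStep (seqRRC j) := by
  show x ∈ (roundStep (seqRRC j)).insertionSort (· ≤ ·) ↔ _
  exact (List.perm_insertionSort (· ≤ ·) _).mem_iff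

lemma length_seqRRC (j : ℕ) : (seqRRC j).length = j + 2 := by
  induction j with
  | zero => rfl
  | succ j ih =>
    show ((roundStep (seqRRC j)).insertionSort (· ≤ ·)).length = j + 3
    rw [(List.perm_insertionSort (· ≤ ·) _).length_eq]
    cases h : seqRRC j with
    | nil => rw [h] at ih; simp at ih
    | cons a tl =>
      rw [h] at ih
      simp [roundStep] at ih ⊢
      omega

lemma exists_cons (j : ℕ) : ∃ a tl, seqRRC j = a :: tl := by
  cases h : seqRRC j with
  | nil => have := length_seqRRC j; rw [h] at this; simp at this
  | cons a tl => exact ⟨a, tl, rfl⟩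

lemma sorted_seqRRC (j : ℕ) : (seqRRC j).Pairwise (· ≤ ·) := by
  cases j with
  | zero => decide
  | succ j => exact List.pairwise_insertionSort _ _

lemma odd_and_five (j : ℕ) : ∀ x ∈ seqRRC j, Odd x ∧ 5 ≤ x := by
  induction j with
  | zero => intro x hx; simp [seqRRC] at hx; subst hx; exact ⟨⟨2, by omega⟩, le_refl _⟩
  | succ j ih =>
    intro x hx
    rw [mem_seqRRC_succ] at hx
    obtain ⟨a, tl, h⟩ := exists_cons j
    rw [h] at hx
    have ha := ih a (by rw [h]; exact List.mem_cons_self)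
    obtain ⟨⟨u, hu⟩, ha5⟩ := ha
    simp [roundStep] at hx
    rcases hx with rfl | hx | rfl
    · exact ⟨⟨u + 1, by omega⟩, by omega⟩
    · exact ih x (by rw [h]; exact List.mem_cons_of_mem a hx)
    · exact ⟨⟨a - 1, by omega⟩, by omega⟩

/-- potential function -/
def phi (M : ℕ) (l : List ℕ) : ℕ := (l.map (fun x => 2 * M - 1 - x)).sum

lemma phi_perm {M : ℕ} {l l' : List ℕ} (h : l.Perm l') : phi M l = phi M l' :=
  (h.map _).sum_eq

lemma phi_seqRRC_succ (M j : ℕ) :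
    phi M (seqRRC (j + 1)) = phi M (roundStep (seqRRC j)) :=
  phi_perm (List.perm_insertionSort (· ≤ ·) _)

/-- lower bounds are preserved. -/
lemma lb_preserved {c j : ℕ} (hc : 1 ≤ c) (h : ∀ x ∈ seqRRC j, c ≤ x) :
    ∀ k, ∀ x ∈ seqRRC (j + k), c ≤ x := by
  intro k
  induction k with
  | zero => exact h
  | succ k ih =>
    intro x hx
    rw [show j + (k + 1) = (j + k) + 1 by omega, mem_seqRRC_succ] at hx
    obtain ⟨a, tl, he⟩ := exists_cons (j + k)
    rw [he] at hx
    have ha := ih a (by rw [he]; exact List.mem_cons_self)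
    simp [roundStep] at hx
    rcases hx with rfl | hx | rfl
    · omega
    · exact ih x (by rw [he]; exact List.mem_cons_of_mem a hx)
    · omega

lemma crux (M : ℕ) (hmodd : Odd M) (hM : 5 ≤ M) :
    ∀ k j, (∀ x ∈ seqRRC j, M ≤ x) → phi M (seqRRC j) ≤ 2 * k →
      ∀ x ∈ seqRRC (j + k), 2 * M - 1 ≤ x := by
  intro k
  induction k with
  | zero =>
    intro j _ hphi x hx
    have : 2 * M - 1 - x = 0 := by
      have hx' : (2 * M - 1 - x) ∈ (seqRRC j).map (fun x => 2 * M - 1 - x) :=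
        List.mem_map_of_mem hx
      have h0 : phi M (seqRRC j) = 0 := by omega
      have := List.single_le_sum (l := (seqRRC j).map (fun x => 2 * M - 1 - x))
        (fun y _ => Nat.zero_le y) _ hx'
      unfold phi at h0
      omega
    omega
  | succ k ih =>
    intro j hlb hphi
    obtain ⟨a, tl, he⟩ := exists_cons j
    have hamem : a ∈ seqRRC j := by rw [he]; exact List.mem_cons_self
    have haM : M ≤ a := hlb a hamem
    by_cases hbig : 2 * M - 1 ≤ a
    · -- all elements already ≥ 2M-1 (a is the min since sorted)
      have hsort := sorted_seqRRC j
      rw [he, List.pairwise_cons] at hsort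
      have hall : ∀ x ∈ seqRRC j, 2 * M - 1 ≤ x := by
        intro x hx
        rw [he] at hx
        rcases List.mem_cons.mp hx with rfl | hx
        · exact hbig
        · exact le_trans hbig (hsort.1 x hx)
      exact lb_preserved (by omega) hall (k + 1)
    · -- min a < 2M-1 : potential drops by 2
      push_neg at hbig
      obtain ⟨⟨u, hu⟩, _⟩ := odd_and_five j a hamem
      obtain ⟨v, hv⟩ := hmodd
      -- a odd, 2M-1 odd, a < 2M-1 ⇒ a ≤ 2M-3
      have ha3 : a + 2 ≤ 2 * M - 1 := by omega
      have hphi1 : phi M (seqRRC (j + 1)) + 2 = phi M (seqRRC j) := by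
        rw [phi_seqRRC_succ, he]
        simp only [roundStep, phi, List.map_cons, List.map_append, List.sum_cons,
          List.sum_append, List.map_cons, List.map_nil, List.sum_cons, List.sum_nil]
        have h1 : 2 * M - 1 - (2 * a - 1) = 0 := by omega
        omega
      have hlb1 : ∀ x ∈ seqRRC (j + 1), M ≤ x := lb_preserved (by omega) hlb 1
      have := ih (j + 1) hlb1 (by omega)
      intro x hx
      exact this x (by rwa [show j + 1 + k = j + (k + 1) by omega])

end RRCAux

/-- For all `t ≥ 2`, every entry (in particular the minimum entry) of the
sequence `r_{p(t)} = seqRRC (p t - 2)` is at least `2^t + 1`. -/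
theorem stmt14 (t : ℕ) (ht : 2 ≤ t) :
    ∀ x ∈ seqRRC (pProd t - 2), 2 ^ t + 1 ≤ x := by
  obtain ⟨s, rfl⟩ : ∃ s, t = s + 2 := ⟨t - 2, by omega⟩
  clear ht
  induction s with
  | zero =>
    intro x hx
    have : pProd 2 = 2 := by decide
    rw [this] at hx
    simp [seqRRC] at hx
    omega
  | succ s ih =>
    -- from step j = pProd (s+2) - 2 with min ≥ M := 2^(s+2)+1,
    -- run k = pProd (s+2) * 2^(s+1) steps.
    set M : ℕ := 2 ^ (s + 2) + 1 with hMdef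
    have hM5 : 5 ≤ M := by
      have : 4 ≤ 2 ^ (s + 2) := by
        calc (4:ℕ) = 2 ^ 2 := rfl
        _ ≤ 2 ^ (s + 2) := Nat.pow_le_pow_right (by norm_num) (by omega)
      omega
    have hmodd : Odd M := ⟨2 ^ (s + 1), by rw [hMdef, pow_succ]; ring⟩
    set j : ℕ := pProd (s + 2) - 2 with hjdef
    have hp2 : 2 ≤ pProd (s + 2) := by
      have h1 : ∀ i ∈ Finset.range (s + 1), 1 ≤ 2 ^ i + 1 := fun i _ => Nat.le_add_left 1 _
      calc (2:ℕ) = 2 ^ 0 + 1 := rfl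
      _ ≤ pProd (s + 2) := by
        unfold pProd
        exact Finset.single_le_prod' h1 (Finset.mem_range.mpr (by omega))
    have hlen : (seqRRC j).length = pProd (s + 2) := by
      rw [RRCAux.length_seqRRC]; omega
    have hphi : RRCAux.phi M (seqRRC j) ≤ 2 * (pProd (s + 2) * 2 ^ (s + 1)) := by
      have hbd : ∀ y ∈ (seqRRC j).map (fun x => 2 * M - 1 - x), y ≤ 2 ^ (s + 2) := by
        intro y hy
        obtain ⟨x, hx, rfl⟩ := List.mem_map.mp hy
        have := ih x hx
        omega
      have := List.sum_le_card_nsmul _ _ hbd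
      rw [List.length_map, hlen] at this
      unfold RRCAux.phi
      calc ((seqRRC j).map (fun x => 2 * M - 1 - x)).sum
          ≤ pProd (s + 2) • 2 ^ (s + 2) := this
        _ = pProd (s + 2) * 2 ^ (s + 2) := by simp [smul_eq_mul]
        _ = 2 * (pProd (s + 2) * 2 ^ (s + 1)) := by ring
    have key := RRCAux.crux M hmodd hM5 (pProd (s + 2) * 2 ^ (s + 1)) j ih hphi
    have hpsucc : pProd (s + 3) = pProd (s + 2) * (2 ^ (s + 1) + 1) := by
      unfold pProd
      simp only [show s + 3 - 1 = (s + 1) + 1 from rfl, show s + 2 - 1 = s + 1 from rfl]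
      rw [Finset.prod_range_succ]
    have hidx : j + pProd (s + 2) * 2 ^ (s + 1) = pProd (s + 3) - 2 := by
      rw [hpsucc]; rw [hjdef]
      have : pProd (s + 2) * (2 ^ (s + 1) + 1) = pProd (s + 2) + pProd (s + 2) * 2 ^ (s + 1) := by ring
      omega
    rw [hidx] at key
    intro x hx
    have := key x hx
    have hpe : (2:ℕ) ^ (s + 1 + 2) = 2 ^ (s + 3) := by rw [show s + 1 + 2 = s + 3 from rfl]
    have h2M : 2 * 2 ^ (s + 2) = 2 ^ (s + 3) := by rw [pow_succ]; ring
    rw [hMdef] at this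
    have h4 : 4 ≤ 2 ^ (s + 2) := by
      calc (4:ℕ) = 2 ^ 2 := rfl
      _ ≤ 2 ^ (s + 2) := Nat.pow_le_pow_right (by norm_num) (by omega)
    omega
end

section
/- If a graph G is r-round with r odd and G contains an odd cycle, then every odd cycle of G contains, for each i with 1 ≤ i ≤ r, at least one edge between the consecutive pair of parts (X_i, X_{i+1}) (indices mod r). -/
/-- In an `r`-round graph (`r` odd) with cyclic partition `p : V → ZMod r`,
every odd cycle contains, for each index `i`, at least one edge between the
consecutive parts `X_i` and `X_{i+1}`. -/
theorem stmt17 {V : Type*} (G : SimpleGraph V) (r : ℕ) (hr : Odd r)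
    (p : V → ZMod r)
    (hp : ∀ u v : V, G.Adj u v → p v = p u + 1 ∨ p u = p v + 1)
    (v : V) (w : G.Walk v v) (hc : w.IsCycle) (ho : Odd w.length) :
    ∀ i : ZMod r, ∃ a b : V, p a = i ∧ p b = i + 1 ∧ s(a, b) ∈ w.edges := by
  intro i
  by_contra hno
  push_neg at hno
  -- hno : ∀ a b, p a = i → p b = i + 1 → s(a,b) ∉ w.edges
  rcases eq_or_ne r 1 with h1 | h1
  · subst h1
    have hl : w.edges ≠ [] := by
      intro h
      have : w.length = 0 := by
        have := w.length_edges
        rw [h] at this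
        simpa using this.symm
      rw [this] at ho
      simpa using ho
    obtain ⟨e, he⟩ := List.exists_mem_of_ne_nil _ hl
    induction e using Sym2.ind with
    | _ a b => exact hno a b (Subsingleton.elim _ _) (Subsingleton.elim _ _) he
  · have hr0 : r ≠ 0 := hr.pos.ne'
    have hr2 : 1 < r := by omega
    haveI : NeZero r := ⟨hr0⟩
    haveI : Fact (1 < r) := ⟨hr2⟩
    set q : V → ℕ := fun x => (p x - (i + 1)).val with hq
    have key : ∀ a b : V, s(a, b) ∈ w.edges → q b = q a + 1 ∨ q a = q b + 1 := by
      intro a b hab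
      have hadj : G.Adj a b := w.adj_of_mem_edges hab
      have step : ∀ c d : V, s(c, d) ∈ w.edges → p d = p c + 1 → q d = q c + 1 := by
        intro c d hcd hpd
        have hci : p c ≠ i := by
          intro h
          exact hno c d h (by rw [hpd, h]) hcd
        have hx : p c - (i + 1) ≠ -1 := by
          intro h
          apply hci
          linear_combination h
        have hxval : (p c - (i + 1)).val ≠ r - 1 := by
          intro h
          apply hx
          have h2 := ZMod.natCast_rightInverse (n := r) (p c - (i + 1))
          rw [h] at h2
          have hcast : ((r - 1 : ℕ) : ZMod r) = -1 := by
            rw [Nat.cast_sub (by omega : 1 ≤ r)]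
            simp
          rw [hcast] at h2
          exact h2.symm
        have hlt : (p c - (i + 1)).val + (1 : ZMod r).val < r := by
          have := ZMod.val_lt (p c - (i + 1))
          rw [ZMod.val_one]
          omega
        have : p d - (i + 1) = (p c - (i + 1)) + 1 := by rw [hpd]; ring
        simp only [hq]
        rw [this, ZMod.val_add_of_lt hlt, ZMod.val_one]
      rcases hp a b hadj with h | h
      · exact Or.inl (step a b hab h)
      · refine Or.inr (step b a ?_ h)
        rwa [Sym2.eq_swap]
    have par : ∀ (u u' : V) (w' : G.Walk u u'), w'.edges ⊆ w.edges →
        Even (w'.length + q u + q u') := by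
      intro u u' w'
      induction w' with
      | nil => intro _; simpa using ⟨q u, by ring⟩
      | @cons a b c h t ih =>
        intro hsub
        have he : s(a, b) ∈ w.edges := hsub (by simp)
        have ht := ih (fun e he' => hsub (by simp [he']))
        obtain ⟨k, hk⟩ := ht
        rcases key a b he with h' | h'
        · exact ⟨k, by simp only [SimpleGraph.Walk.length_cons]; omega⟩
        · exact ⟨k + 1, by simp only [SimpleGraph.Walk.length_cons]; omega⟩
    obtain ⟨k, hk⟩ := par v v w (fun e he => he)
    obtain ⟨m, hm⟩ := ho
    omega
end

section
/- If there exist edge colourings with q colours of K_m and with s colours of K_n, each having no monochromatic odd cycle of length less than r, then there exists an edge colouring of K_{mn} with q+s colours having no monochromatic odd cycle of length less than r. -/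
open SimpleGraph Walk

private lemma myEdgeEndpoint {V : Type} {G : SimpleGraph V} {v u : V} (p : G.Walk v u)
    (hp : p.IsPath) (he : s(u, v) ∈ p.edges) : p.length = 1 := by
  induction p with
  | nil => simp at he
  | @cons a b c h q ih =>
    rw [edges_cons, List.mem_cons] at he
    rcases he with he | he
    · rw [Sym2.eq_iff] at he
      rcases he with ⟨h1, h2⟩ | ⟨h1, h2⟩
      · subst h1; subst h2; exact absurd h G.irrefl
      · subst h1
        have hq0 : q.length = 0 := by
          have hh := (cons_isPath_iff _ _).mp hp
          cases q with
          | nil => rfl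
          | cons h' q' => simp [support_cons] at hh
        simp [hq0]
    · exfalso
      have := Walk.snd_mem_support_of_mem_edges q he
      exact ((cons_isPath_iff _ _).mp hp).2 this

private lemma myExtract {V : Type} [DecidableEq V] {G : SimpleGraph V} :
    ∀ (N : ℕ) (u : V) (w : G.Walk u u), w.length ≤ N → Odd w.length →
    ∃ (x : V) (c : G.Walk x x), c.IsCycle ∧ Odd c.length ∧ c.length ≤ w.length ∧
      ∀ e ∈ c.edges, e ∈ w.edges := by
  intro N
  induction N with
  | zero =>
    intro u w hl ho
    simp [Nat.le_zero.mp hl, Nat.odd_iff] at ho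
  | succ N ih =>
    intro u w hl ho
    cases w with
    | nil => simp [Nat.odd_iff] at ho
    | @cons _ v _ h p =>
      by_cases hnd : p.support.Nodup
      · have hpath : p.IsPath := IsPath.mk' hnd
        by_cases he : s(u, v) ∈ p.edges
        · have h1 := myEdgeEndpoint p hpath he
          rw [length_cons, h1] at ho
          exact absurd ho (by decide)
        · refine ⟨u, cons h p, ?_, ho, le_refl _, fun e he => he⟩
          exact (cons_isCycle_iff p h).mpr ⟨hpath, he⟩
      · obtain ⟨x, hx⟩ := List.exists_duplicate_iff_not_nodup.mpr hnd
        have hcount : 2 ≤ p.support.count x := List.duplicate_iff_two_le_count.mp hx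
        have hx1 : x ∈ p.support := hx.mem
        set p1 := p.takeUntil x hx1 with hp1
        set p2 := p.dropUntil x hx1 with hp2
        have hspec : p1.append p2 = p := p.take_spec hx1
        have hxt : x ∈ p2.support.tail := by
          have hc1 : p1.support.count x = 1 := p.count_support_takeUntil_eq_one hx1
          have : p.support = p1.support ++ p2.support.tail := by
            rw [← hspec, support_append]
          rw [this, List.count_append, hc1] at hcount
          have : 1 ≤ p2.support.tail.count x := by omega
          exact List.count_pos_iff.mp this
        cases hp2' : p2 with
        | nil => rw [hp2'] at hxt; simp at hxt
        | @cons _ y _ h2 p3 =>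
          have hx3 : x ∈ p3.support := by
            rw [hp2'] at hxt; simpa using hxt
          set p3a := p3.takeUntil x hx3 with hp3a
          set p3b := p3.dropUntil x hx3 with hp3b
          have hspec3 : p3a.append p3b = p3 := p3.take_spec hx3
          -- two closed walks
          set c1 : G.Walk x x := Walk.cons h2 p3a with hc1def
          set w' : G.Walk u u := Walk.cons h (p1.append p3b) with hw'def
          have hlen : (Walk.cons h p).length = c1.length + w'.length := by
            have : p.length = p1.length + p2.length := by
              rw [← hspec, length_append]
            have h2l : p2.length = 1 + p3.length := by rw [hp2']; simp [length_cons]; omega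
            have h3l : p3.length = p3a.length + p3b.length := by
              rw [← hspec3, length_append]
            simp only [hc1def, hw'def, length_cons, length_append]
            omega
          have hedges : ∀ e, (e ∈ c1.edges ∨ e ∈ w'.edges) → e ∈ (Walk.cons h p).edges := by
            intro e hme
            have hpe : p.edges = p1.edges ++ (s(x, y) :: (p3a.edges ++ p3b.edges)) := by
              conv_lhs => rw [← hspec]
              rw [edges_append, hp2', edges_cons, ← hspec3, edges_append]
            simp only [hc1def, hw'def, edges_cons, edges_append, List.mem_cons,
              List.mem_append, hpe] at hme ⊢
            tauto
          have hc1pos : 1 ≤ c1.length := by simp [hc1def, length_cons]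
          have hw'pos : 1 ≤ w'.length := by simp [hw'def, length_cons]
          rcases Nat.even_or_odd c1.length with hev | hod
          · -- w' is odd
            have hw'odd : Odd w'.length := by
              rcases hev with ⟨k, hk⟩; rcases ho with ⟨j, hj⟩
              refine ⟨j - k, by omega⟩
            obtain ⟨z, c, hc, hco, hcl, hce⟩ := ih u w' (by omega) hw'odd
            exact ⟨z, c, hc, hco, by omega, fun e he => hedges e (Or.inr (hce e he))⟩
          · obtain ⟨z, c, hc, hco, hcl, hce⟩ := ih x c1 (by omega) hod
            exact ⟨z, c, hc, hco, by omega, fun e he => hedges e (Or.inl (hce e he))⟩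

private lemma myProj {V α : Type} (f : V → α) {a b : V} :
    ∀ (w : (⊤ : SimpleGraph V).Walk a b),
    (∀ x y : V, s(x, y) ∈ w.edges → f x ≠ f y) →
    ∃ w' : (⊤ : SimpleGraph α).Walk (f a) (f b),
      w'.length = w.length ∧ ∀ e ∈ w'.edges, ∃ x y : V, s(x, y) ∈ w.edges ∧ e = s(f x, f y) := by
  intro w
  induction w with
  | nil => exact fun _ => ⟨Walk.nil, rfl, by simp⟩
  | @cons u v c h p ih =>
    intro hf
    obtain ⟨w', hl, he⟩ := ih (fun x y hxy => hf x y (by simp [hxy]))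
    have hadj : (⊤ : SimpleGraph α).Adj (f u) (f v) := by
      simp only [top_adj]
      exact hf u v (by simp)
    refine ⟨Walk.cons hadj w', by simp [hl], ?_⟩
    intro e hme
    rw [edges_cons, List.mem_cons] at hme
    rcases hme with rfl | hme
    · exact ⟨u, v, by simp, rfl⟩
    · obtain ⟨x, y, hxy, rfl⟩ := he e hme
      exact ⟨x, y, by simp [hxy], rfl⟩

/-- If `K_m` has a `q`-colouring and `K_n` has an `s`-colouring, each with no
monochromatic odd cycle of length less than `r`, then `K_{mn}` has a
`(q+s)`-colouring with no monochromatic odd cycle of length less than `r`. -/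
theorem stmt18 (r m n q s : ℕ)
    (hm : ∃ C₁ : Sym2 (Fin m) → Fin q,
      ∀ (v : Fin m) (w : (⊤ : SimpleGraph (Fin m)).Walk v v),
        w.IsCycle → Odd w.length → (∃ c, ∀ e ∈ w.edges, C₁ e = c) → r ≤ w.length)
    (hn : ∃ C₂ : Sym2 (Fin n) → Fin s,
      ∀ (v : Fin n) (w : (⊤ : SimpleGraph (Fin n)).Walk v v),
        w.IsCycle → Odd w.length → (∃ c, ∀ e ∈ w.edges, C₂ e = c) → r ≤ w.length) :
    ∃ C : Sym2 (Fin (m * n)) → Fin (q + s),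
      ∀ (v : Fin (m * n)) (w : (⊤ : SimpleGraph (Fin (m * n))).Walk v v),
        w.IsCycle → Odd w.length → (∃ c, ∀ e ∈ w.edges, C e = c) → r ≤ w.length := by
  obtain ⟨C₁, hC₁⟩ := hm
  obtain ⟨C₂, hC₂⟩ := hn
  set e : Fin (m * n) ≃ Fin m × Fin n := finProdFinEquiv.symm with he
  set C : Sym2 (Fin (m * n)) → Fin (q + s) := Sym2.lift ⟨fun a b =>
    if (e a).1 = (e b).1 then Fin.natAdd q (C₂ s((e a).2, (e b).2))
    else Fin.castAdd s (C₁ s((e a).1, (e b).1)), by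
      intro a b
      dsimp only
      by_cases hab : (e a).1 = (e b).1
      · rw [if_pos hab, if_pos hab.symm, Sym2.eq_swap]
      · rw [if_neg hab, if_neg (fun hh => hab hh.symm), Sym2.eq_swap]⟩ with hC
  refine ⟨C, ?_⟩
  rintro v w hcyc hodd ⟨c, hc⟩
  have hCpair : ∀ a b : Fin (m * n), C s(a, b) =
      if (e a).1 = (e b).1 then Fin.natAdd q (C₂ s((e a).2, (e b).2))
      else Fin.castAdd s (C₁ s((e a).1, (e b).1)) := fun a b => rfl
  by_cases hcq : (c : ℕ) < q
  · -- left colour: first coordinates differ on every edge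
    have hdiff : ∀ x y : Fin (m * n), s(x, y) ∈ w.edges → (e x).1 ≠ (e y).1 := by
      intro x y hxy hfe
      have := hc _ hxy
      rw [hCpair, if_pos hfe] at this
      have : q + (C₂ s((e x).2, (e y).2) : ℕ) = (c : ℕ) := by
        rw [← this]; simp [Fin.natAdd]
      omega
    obtain ⟨w', hl, hee⟩ := myProj (fun x => (e x).1) w hdiff
    have hmono : ∀ e' ∈ w'.edges, C₁ e' = ⟨(c : ℕ), hcq⟩ := by
      intro e' he'
      obtain ⟨x, y, hxy, rfl⟩ := hee e' he'
      have := hc _ hxy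
      rw [hCpair, if_neg (hdiff x y hxy)] at this
      have h2 : ((C₁ s((e x).1, (e y).1)) : ℕ) = (c : ℕ) := by
        rw [← this]; simp [Fin.castAdd]
      exact Fin.ext h2
    have hwodd : Odd w'.length := hl ▸ hodd
    obtain ⟨z, cyc, hcyc', hco, hcl, hce⟩ := myExtract w'.length _ w' le_rfl hwodd
    have := hC₁ z cyc hcyc' hco ⟨⟨(c : ℕ), hcq⟩, fun e' he' => hmono e' (hce e' he')⟩
    omega
  · -- right colour: first coordinates equal on every edge
    have hsame : ∀ x y : Fin (m * n), s(x, y) ∈ w.edges → (e x).1 = (e y).1 := by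
      intro x y hxy
      by_contra hfe
      have := hc _ hxy
      rw [hCpair, if_neg hfe] at this
      have : ((C₁ s((e x).1, (e y).1)) : ℕ) = (c : ℕ) := by
        rw [← this]; simp [Fin.castAdd]
      have hlt := (C₁ s((e x).1, (e y).1)).isLt
      omega
    have hdiff : ∀ x y : Fin (m * n), s(x, y) ∈ w.edges → (e x).2 ≠ (e y).2 := by
      intro x y hxy hfe
      have hne : x ≠ y := by
        have := w.edges_subset_edgeSet hxy
        simp [SimpleGraph.mem_edgeSet] at this
        exact this
      apply hne
      apply e.injective
      exact Prod.ext (hsame x y hxy) hfe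
    have hcs : (c : ℕ) - q < s := by have := c.isLt; omega
    obtain ⟨w', hl, hee⟩ := myProj (fun x => (e x).2) w hdiff
    have hmono : ∀ e' ∈ w'.edges, C₂ e' = ⟨(c : ℕ) - q, hcs⟩ := by
      intro e' he'
      obtain ⟨x, y, hxy, rfl⟩ := hee e' he'
      have := hc _ hxy
      rw [hCpair, if_pos (hsame x y hxy)] at this
      have h2 : q + ((C₂ s((e x).2, (e y).2)) : ℕ) = (c : ℕ) := by
        rw [← this]; simp [Fin.natAdd]
      exact Fin.ext (by simp; omega)
    have hwodd : Odd w'.length := hl ▸ hodd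
    obtain ⟨z, cyc, hcyc', hco, hcl, hce⟩ := myExtract w'.length _ w' le_rfl hwodd
    have := hC₂ z cyc hcyc' hco ⟨⟨(c : ℕ) - q, hcs⟩, fun e' he' => hmono e' (hce e' he')⟩
    omega
end

section
/- If a rooted r-round graph G with root O contains an odd cycle of length exactly r (r odd), then that cycle passes through the root O. -/
/-- In a rooted `r`-round graph with root `O` (`r` odd), every odd cycle of
length exactly `r` passes through the root. -/
theorem stmt19 {V : Type*} (G : SimpleGraph V) (r : ℕ) (hr : Odd r) (O : V)
    (h : IsRootedRound G r O) (v : V) (w : G.Walk v v) (hc : w.IsCycle)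
    (hl : w.length = r) : O ∈ w.support := by
  obtain ⟨p, hadj, hO, hO'⟩ := h
  haveI : NeZero r := ⟨hr.pos.ne'⟩
  set q : ℕ → ZMod r := fun i => p (w.getVert i) with hq
  set ε : ℕ → ℤ := fun i => if q (i+1) = q i + 1 then 1 else -1 with hε
  set c : ℕ → ℤ := fun j => ∑ i ∈ Finset.range j, ε i with hcdef
  -- step values
  have hstep : ∀ i < r, q (i+1) = q i + (ε i : ZMod r) := by
    intro i hi
    have hadj' := w.adj_getVert_succ (by omega : i < w.length)
    have := hadj _ _ hadj'
    by_cases hcase : q (i+1) = q i + 1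
    · simp [hε, hcase]
    · have h2 : q i = q (i+1) + 1 := by
        rcases this with h1 | h1
        · exact absurd h1 hcase
        · exact h1
      simp only [hε, if_neg hcase]
      push_cast
      rw [h2]; ring
  have hcast : ∀ j ≤ r, q j = q 0 + ((c j : ℤ) : ZMod r) := by
    intro j hj
    induction j with
    | zero => simp [hcdef]
    | succ n ih =>
      have hn : n ≤ r := by omega
      have := hstep n (by omega)
      rw [this, ih hn]
      simp [hcdef, Finset.sum_range_succ]
      push_cast
      ring
  have hpm : ∀ i, ε i = 1 ∨ ε i = -1 := by
    intro i; simp only [hε]; split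
    exacts [Or.inl rfl, Or.inr rfl]
  -- q r = q 0
  have hqr : q r = q 0 := by
    have h1 : w.getVert r = v := by rw [← hl]; exact w.getVert_length
    simp [hq, h1]
  -- r ∣ c r
  have hdvd : (r : ℤ) ∣ c r := by
    have := hcast r le_rfl
    rw [hqr] at this
    have h0 : ((c r : ℤ) : ZMod r) = 0 := by
      rwa [left_eq_add] at this
    exact_mod_cast (ZMod.intCast_zmod_eq_zero_iff_dvd _ _).mp h0
  -- bound
  have habs : |c r| ≤ r := by
    calc |c r| ≤ ∑ i ∈ Finset.range r, |ε i| := Finset.abs_sum_le_sum_abs _ _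
    _ ≤ ∑ i ∈ Finset.range r, 1 := by
        apply Finset.sum_le_sum
        intro i _
        simp only [hε]
        split <;> simp
    _ = r := by simp
  -- odd
  have hodd : Odd (c r) := by
    have hmod : ∀ i ∈ Finset.range r, ε i % 2 = 1 % 2 := by
      intro i _
      simp only [hε]; split <;> decide
    have : c r % 2 = (∑ _i ∈ Finset.range r, (1:ℤ)) % 2 :=
      Finset.sum_int_mod _ _ _ ▸ by
        rw [Finset.sum_congr rfl hmod, ← Finset.sum_int_mod]
    rw [Finset.sum_const, Finset.card_range, nsmul_eq_mul, mul_one] at this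
    rcases hr with ⟨k, hk⟩
    have hrz : (r:ℤ) = 2*k+1 := by exact_mod_cast hk
    exact Int.odd_iff.mpr (by omega)
  have hne : c r ≠ 0 := by
    rintro h0; rw [h0] at hodd; exact (Int.not_odd_iff_even.mpr Even.zero) hodd
  have hcr : c r = r ∨ c r = -r := by
    rcases hdvd with ⟨k, hk⟩
    have hrpos : (0:ℤ) < r := by exact_mod_cast hr.pos
    have habs' : (r:ℤ) * |k| ≤ r := by
      rw [hk, abs_mul, abs_of_pos hrpos] at habs; exact habs
    have hk0 : k ≠ 0 := by rintro rfl; rw [hk, mul_zero] at hne; exact hne rfl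
    have : k = 1 ∨ k = -1 := by
      rcases lt_trichotomy k 0 with hx | hx | hx
      · right
        rw [abs_of_neg hx] at habs'
        have h2 : -k ≤ 1 := le_of_mul_le_mul_left (by linarith) hrpos
        omega
      · exact absurd hx hk0
      · left
        rw [abs_of_pos hx] at habs'
        have h2 : k ≤ 1 := le_of_mul_le_mul_left (by linarith) hrpos
        omega
    rcases this with h1 | h1 <;> rw [hk, h1]
    · left; ring
    · right; ring
  -- all steps same sign
  have hall : (∀ i < r, ε i = 1) ∨ (∀ i < r, ε i = -1) := by
    rcases hcr with h1 | h1
    · left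
      intro i hi
      by_contra hne1
      have hεi : ε i = -1 := (hpm i).resolve_left hne1
      have hlt : c r < ∑ _j ∈ Finset.range r, (1:ℤ) := by
        apply Finset.sum_lt_sum (f := ε)
        · intro j _; rcases hpm j with h|h <;> rw [h] <;> norm_num
        · exact ⟨i, Finset.mem_range.mpr hi, by rw [hεi]; norm_num⟩
      simp [h1] at hlt
    · right
      intro i hi
      by_contra hne1
      have hεi : ε i = 1 := (hpm i).resolve_right hne1
      have hlt : (∑ _j ∈ Finset.range r, (-1:ℤ)) < c r := by
        apply Finset.sum_lt_sum (g := ε)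
        · intro j _; rcases hpm j with h|h <;> rw [h] <;> norm_num
        · exact ⟨i, Finset.mem_range.mpr hi, by rw [hεi]; norm_num⟩
      simp [h1] at hlt
  -- find index with q = 0
  have hex : ∃ j ≤ r, q j = 0 := by
    rcases hall with hA | hA
    · have hcj : ∀ j ≤ r, c j = j := by
        intro j hj
        simp only [hcdef]
        rw [Finset.sum_congr rfl (fun i hi => hA i (by
          have := Finset.mem_range.mp hi; omega))]
        simp
      refine ⟨(-q 0).val, (ZMod.val_lt _).le, ?_⟩
      rw [hcast _ (ZMod.val_lt _).le, hcj _ (ZMod.val_lt _).le]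
      push_cast
      rw [ZMod.natCast_val, ZMod.cast_id]
      ring
    · have hcj : ∀ j ≤ r, c j = -j := by
        intro j hj
        simp only [hcdef]
        rw [Finset.sum_congr rfl (fun i hi => hA i (by
          have := Finset.mem_range.mp hi; omega))]
        simp
      refine ⟨(q 0).val, (ZMod.val_lt _).le, ?_⟩
      rw [hcast _ (ZMod.val_lt _).le, hcj _ (ZMod.val_lt _).le]
      push_cast
      rw [ZMod.natCast_val, ZMod.cast_id]
      ring
  obtain ⟨j, hj, hqj⟩ := hex
  have : w.getVert j = O := hO' _ hqj
  rw [SimpleGraph.Walk.mem_support_iff_exists_getVert]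
  exact ⟨j, this, by omega⟩
end
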